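/- arXiv:1109.3403 — 3 statements merged into one kernel-verified Lean document; each statement's English description precedes it below -/
import Mathlib

section
/- In the DaC model on Z^2, for any fixed p < 1/2 (the bond percolation critical value of Z^2) and any event A ⊂ {0,1}^{Z^2} depending on the colors of finitely many vertices, the probability μ_{p,r}^{Z^2}(A) is a polynomial in r. -/
open MeasureTheory Filter Set

attribute [local instance] Classical.propDecidable

structure Multigraph where
  V : Type
  E : Type
  ends : E → V × V

namespace Multigraph
variable (G : Multigraph)

/-- The edge `e` is incident to the vertex `v`. -/
def Inc (e : G.E) (v : G.V) : Prop := (G.ends e).1 = v ∨ (G.ends e).2 = v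

/-- The degree of a vertex: number of incident edges, counted with multiplicity. -/
noncomputable def degree (v : G.V) : ℕ := Nat.card {e : G.E // G.Inc e v}

/-- Adjacency of vertices. -/
def Adj (x y : G.V) : Prop := ∃ e, G.ends e = (x, y) ∨ G.ends e = (y, x)

/-- Connectivity through open edges of the bond configuration `η`. -/
def OpenConn (η : G.E → Bool) : G.V → G.V → Prop :=
  Relation.ReflTransGen (fun x y => ∃ e, η e = true ∧ (G.ends e = (x, y) ∨ G.ends e = (y, x)))

/-- The (vertex set of the) bond cluster of `v`. -/
def cluster (η : G.E → Bool) (v : G.V) : Set G.V := {w | G.OpenConn η v w}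

/-- `x` and `y` lie in the same black cluster of the site configuration `ξ`. -/
def BlackConn (ξ : G.V → Bool) (x y : G.V) : Prop :=
  ξ x = true ∧ Relation.ReflTransGen (fun u w => G.Adj u w ∧ ξ w = true) x y

/-- The event that some black cluster is infinite. -/
def InfiniteBlack : Set (G.V → Bool) := {ξ | ∃ v, {w | G.BlackConn ξ v w}.Infinite}

/-- The minimal vertex (w.r.t. the enumeration `idx`) of the bond cluster of `v`. -/
noncomputable def rep (idx : G.V → ℕ) (η : G.E → Bool) (v : G.V) : G.V :=
  haveI : Nonempty G.V := ⟨v⟩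
  Function.invFun idx (sInf (idx '' G.cluster η v))

/-- The site configuration obtained by giving each bond cluster the color of
its minimal vertex. -/
noncomputable def color (idx : G.V → ℕ) (η : G.E → Bool) (κ : G.V → Bool) : G.V → Bool :=
  fun v => κ (G.rep idx η v)

end Multigraph

/-- `ν` is the Bernoulli(`p`) product measure on `S → Bool`. -/
def IsBernoulli {S : Type} (p : ℝ) (ν : Measure (S → Bool)) : Prop :=
  IsProbabilityMeasure ν ∧ ∀ (s : Finset S) (f : S → Bool),
    ν {ω | ∀ i ∈ s, ω i = f i} = ∏ i ∈ s, ENNReal.ofReal (if f i then p else 1 - p)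

/-- `μ p r` is the divide-and-color measure built from the Bernoulli bond measures
`νE p` and the Bernoulli coloring measures `νV r`, clusters being colored by the
color of their `idx`-minimal vertex. -/
def IsDaC (G : Multigraph) (idx : G.V → ℕ)
    (νE : ℝ → Measure (G.E → Bool)) (νV : ℝ → Measure (G.V → Bool))
    (μ : ℝ → ℝ → Measure (G.V → Bool)) : Prop :=
  (∀ p ∈ Set.Icc (0:ℝ) 1, IsBernoulli p (νE p)) ∧
  (∀ r ∈ Set.Icc (0:ℝ) 1, IsBernoulli r (νV r)) ∧
  (∀ p r, μ p r = ((νE p).prod (νV r)).map (fun ω => G.color idx ω.1 ω.2))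

/-- `rc` is the critical coloring value function of the family of measures `μ`. -/
def IsCriticalColoring (G : Multigraph) (μ : ℝ → ℝ → Measure (G.V → Bool)) (rc : ℝ → ℝ) : Prop :=
  ∀ p ∈ Set.Icc (0:ℝ) 1, rc p ∈ Set.Icc (0:ℝ) 1 ∧
    (∀ r ∈ Set.Icc (0:ℝ) 1, r < rc p → μ p r G.InfiniteBlack = 0) ∧
    (∀ r ∈ Set.Icc (0:ℝ) 1, rc p < r → 0 < μ p r G.InfiniteBlack)

/-- `pc` is the critical point of Bernoulli bond percolation `νE`. -/
def IsBondCritical (G : Multigraph) (νE : ℝ → Measure (G.E → Bool)) (pc : ℝ) : Prop :=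
  pc ∈ Set.Icc (0:ℝ) 1 ∧
  ∀ p ∈ Set.Icc (0:ℝ) 1,
    (p < pc → νE p {η | ∃ v, (G.cluster η v).Infinite} = 0) ∧
    (pc < p → 0 < νE p {η | ∃ v, (G.cluster η v).Infinite})



/-- The square lattice `Z²`: vertices are points of `ℤ × ℤ`, and each vertex carries
two edges, one to its right neighbor and one to its top neighbor. -/
abbrev Z2 : Multigraph where
  V := ℤ × ℤ
  E := (ℤ × ℤ) × Bool
  ends := fun e => (e.1, if e.2 then (e.1.1 + 1, e.1.2) else (e.1.1, e.1.2 + 1))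


/-! ### Auxiliary development for the proof -/

section DaCPolyAux

open MeasureTheory

noncomputable def bw (r : ℝ) (b : Bool) : ENNReal := ENNReal.ofReal (if b then r else 1 - r)

lemma bw_ne_top (r : ℝ) (b : Bool) : bw r b ≠ ⊤ := ENNReal.ofReal_ne_top

/-- Measure of an event determined by finitely many coordinates under a Bernoulli measure. -/
lemma bernoulli_event {S : Type} {r : ℝ} {ν : Measure (S → Bool)} (hν : IsBernoulli r ν)
    (T : Finset S) (C : Set ({x // x ∈ T} → Bool)) :
    ν {ω | (fun t : {x // x ∈ T} => ω ↑t) ∈ C}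
      = ∑ f : {x // x ∈ T} → Bool,
          if f ∈ C then ∏ t : {x // x ∈ T}, bw r (f t) else 0 := by
  classical
  set res : (S → Bool) → ({x // x ∈ T} → Bool) := fun ω t => ω ↑t with hres
  have hcyl : ∀ f : {x // x ∈ T} → Bool,
      res ⁻¹' {f} = {ω | ∀ i ∈ T, ω i = (fun i => if h : i ∈ T then f ⟨i, h⟩ else false) i} := by
    intro f
    ext ω
    simp only [Set.mem_preimage, Set.mem_singleton_iff, Set.mem_setOf_eq, hres]
    constructor
    · intro h i hi
      rw [dif_pos hi, ← h]
    · intro h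
      funext t
      have := h t.1 t.2
      rwa [dif_pos t.2] at this
  have hmeas : ∀ f : {x // x ∈ T} → Bool, MeasurableSet (res ⁻¹' {f}) := by
    intro f
    rw [hcyl f]
    have : {ω : S → Bool | ∀ i ∈ T, ω i
          = (fun i => if h : i ∈ T then f ⟨i, h⟩ else false) i}
        = ⋂ i ∈ (T : Set S), (fun ω : S → Bool => ω i) ⁻¹'
            {(fun i => if h : i ∈ T then f ⟨i, h⟩ else false) i} := by
      ext ω; simp
    rw [this]
    exact MeasurableSet.biInter (Finset.countable_toSet T)
      (fun i _ => measurable_pi_apply i (measurableSet_singleton _))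
  have hunion : {ω | res ω ∈ C}
      = ⋃ f ∈ (Finset.univ.filter (fun f => f ∈ C) :
          Finset ({x // x ∈ T} → Bool)), res ⁻¹' {f} := by
    ext ω
    simp only [Set.mem_setOf_eq, Set.mem_iUnion, Set.mem_preimage, Set.mem_singleton_iff,
      Finset.mem_filter, Finset.mem_univ, true_and]
    constructor
    · intro h; exact ⟨res ω, h, rfl⟩
    · rintro ⟨f, hf, rfl⟩; exact hf
  have : ν {ω | res ω ∈ C}
      = ∑ f ∈ Finset.univ.filter (fun f => f ∈ C), ν (res ⁻¹' {f}) := by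
    rw [hunion]
    refine measure_biUnion_finset ?_ (fun f _ => hmeas f)
    intro f _ g _ hfg
    exact Set.disjoint_left.2 fun ω hω hω' => hfg (hω.symm.trans hω')
  rw [this, Finset.sum_filter]
  refine Finset.sum_congr rfl fun f _ => ?_
  split_ifs with h
  · rw [hcyl f, hν.2 T (fun i => if h : i ∈ T then f ⟨i, h⟩ else false)]
    rw [← Finset.prod_coe_sort T]
    refine Finset.prod_congr rfl fun t _ => ?_
    rw [bw, dif_pos t.2]
  · rfl

/-! #### Measurability on the square lattice -/

lemma measurableSet_step (x y : Z2.V) :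
    MeasurableSet {η : Z2.E → Bool |
      ∃ e, η e = true ∧ (Z2.ends e = (x, y) ∨ Z2.ends e = (y, x))} := by
  have h : {η : Z2.E → Bool | ∃ e, η e = true ∧ (Z2.ends e = (x, y) ∨ Z2.ends e = (y, x))}
      = ⋃ e : Z2.E, ((fun η : Z2.E → Bool => η e) ⁻¹' {true}
          ∩ {_η : Z2.E → Bool | Z2.ends e = (x, y) ∨ Z2.ends e = (y, x)}) := by
    ext η
    simp only [Set.mem_setOf_eq, Set.mem_iUnion, Set.mem_inter_iff, Set.mem_preimage,
      Set.mem_singleton_iff]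
  rw [h]
  exact MeasurableSet.iUnion fun e =>
    ((measurable_pi_apply e) (measurableSet_singleton true)).inter (MeasurableSet.const _)

lemma measurableSet_chain (l : List Z2.V) (x : Z2.V) :
    MeasurableSet {η : Z2.E → Bool |
      List.Chain (fun a b => ∃ e, η e = true ∧ (Z2.ends e = (a, b) ∨ Z2.ends e = (b, a))) x l} := by
  induction l generalizing x with
  | nil =>
      have : {η : Z2.E → Bool |
          List.Chain (fun a b => ∃ e, η e = true ∧ (Z2.ends e = (a, b) ∨ Z2.ends e = (b, a))) x []}
          = Set.univ := by
        ext η; simp [List.Chain]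
      rw [this]; exact MeasurableSet.univ
  | cons y l ih =>
      have : {η : Z2.E → Bool |
          List.Chain (fun a b => ∃ e, η e = true ∧ (Z2.ends e = (a, b) ∨ Z2.ends e = (b, a)))
            x (y :: l)}
          = {η : Z2.E → Bool | ∃ e, η e = true ∧ (Z2.ends e = (x, y) ∨ Z2.ends e = (y, x))}
            ∩ {η : Z2.E → Bool |
          List.Chain (fun a b => ∃ e, η e = true ∧ (Z2.ends e = (a, b) ∨ Z2.ends e = (b, a)))
            y l} := by
        ext η; simp [List.Chain, List.isChain_cons_cons]
      rw [this]
      exact (measurableSet_step x y).inter (ih y)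

lemma measurableSet_openConn (v w : Z2.V) :
    MeasurableSet {η : Z2.E → Bool | Z2.OpenConn η v w} := by
  have h : {η : Z2.E → Bool | Z2.OpenConn η v w}
      = ⋃ l : List Z2.V,
          ({η : Z2.E → Bool |
              List.Chain (fun a b => ∃ e, η e = true ∧ (Z2.ends e = (a, b) ∨ Z2.ends e = (b, a)))
                v l}
            ∩ {_η : Z2.E → Bool | (v :: l).getLast (List.cons_ne_nil _ _) = w}) := by
    ext η
    simp only [Set.mem_setOf_eq, Set.mem_iUnion, Set.mem_inter_iff]
    constructor
    · intro hη
      obtain ⟨l, h1, h2⟩ := List.exists_isChain_cons_of_relationReflTransGen hη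
      exact ⟨l, h1, h2⟩
    · rintro ⟨l, h1, h2⟩
      exact List.relationReflTransGen_of_exists_isChain_cons l h1 h2
  rw [h]
  exact MeasurableSet.iUnion fun l => (measurableSet_chain l v).inter (MeasurableSet.const _)

lemma mem_cluster_self (η : Z2.E → Bool) (v : Z2.V) : v ∈ Z2.cluster η v :=
  Relation.ReflTransGen.refl

lemma rep_spec (idx : Z2.V → ℕ) (hidx : Function.Injective idx) (η : Z2.E → Bool) (v : Z2.V) :
    Z2.rep idx η v ∈ Z2.cluster η v ∧ ∀ x ∈ Z2.cluster η v, idx (Z2.rep idx η v) ≤ idx x := by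
  have hne : (idx '' Z2.cluster η v).Nonempty := ⟨idx v, v, mem_cluster_self η v, rfl⟩
  obtain ⟨u0, hu0, hu0'⟩ := Nat.sInf_mem hne
  have hrep : Z2.rep idx η v = u0 := by
    show Function.invFun idx (sInf (idx '' Z2.cluster η v)) = u0
    rw [← hu0', Function.leftInverse_invFun hidx]
  rw [hrep]
  exact ⟨hu0, fun x hx => le_trans (le_of_eq hu0') (Nat.sInf_le ⟨x, hx, rfl⟩)⟩

lemma rep_eq_iff (idx : Z2.V → ℕ) (hidx : Function.Injective idx) (η : Z2.E → Bool)
    (v u : Z2.V) :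
    Z2.rep idx η v = u ↔ u ∈ Z2.cluster η v ∧ ∀ x ∈ Z2.cluster η v, idx u ≤ idx x := by
  constructor
  · rintro rfl; exact rep_spec idx hidx η v
  · rintro ⟨hu, hmin⟩
    obtain ⟨hr, hrmin⟩ := rep_spec idx hidx η v
    exact hidx (le_antisymm (hrmin u hu) (hmin _ hr))

lemma measurableSet_rep_eq (idx : Z2.V → ℕ) (hidx : Function.Injective idx) (v u : Z2.V) :
    MeasurableSet {η : Z2.E → Bool | Z2.rep idx η v = u} := by
  have h : {η : Z2.E → Bool | Z2.rep idx η v = u}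
      = {η : Z2.E → Bool | Z2.OpenConn η v u}
        ∩ ⋂ x : Z2.V, {η : Z2.E → Bool | Z2.OpenConn η v x → idx u ≤ idx x} := by
    ext η
    simp only [Set.mem_setOf_eq, Set.mem_inter_iff, Set.mem_iInter]
    rw [rep_eq_iff idx hidx]
    exact Iff.rfl
  rw [h]
  refine (measurableSet_openConn v u).inter (MeasurableSet.iInter fun x => ?_)
  by_cases hle : idx u ≤ idx x
  · have : {η : Z2.E → Bool | Z2.OpenConn η v x → idx u ≤ idx x} = Set.univ := by
      ext η; simp [hle]
    rw [this]; exact MeasurableSet.univ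
  · have : {η : Z2.E → Bool | Z2.OpenConn η v x → idx u ≤ idx x}
        = {η : Z2.E → Bool | Z2.OpenConn η v x}ᶜ := by
      ext η; simp [hle]
    rw [this]; exact (measurableSet_openConn v x).compl

lemma measurableSet_repLine (idx : Z2.V → ℕ) (hidx : Function.Injective idx) (a b : Z2.V) :
    MeasurableSet {η : Z2.E → Bool | Z2.rep idx η a = Z2.rep idx η b} := by
  have h : {η : Z2.E → Bool | Z2.rep idx η a = Z2.rep idx η b}
      = ⋃ u : Z2.V, ({η : Z2.E → Bool | Z2.rep idx η a = u}
          ∩ {η : Z2.E → Bool | Z2.rep idx η b = u}) := by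
    ext η
    simp only [Set.mem_setOf_eq, Set.mem_iUnion, Set.mem_inter_iff]
    constructor
    · intro h; exact ⟨Z2.rep idx η b, h, rfl⟩
    · rintro ⟨u, h1, h2⟩; exact h1.trans h2.symm
  rw [h]
  exact MeasurableSet.iUnion fun u =>
    (measurableSet_rep_eq idx hidx a u).inter (measurableSet_rep_eq idx hidx b u)

lemma measurable_colorMap (idx : Z2.V → ℕ) (hidx : Function.Injective idx) :
    Measurable (fun ω : (Z2.E → Bool) × (Z2.V → Bool) => Z2.color idx ω.1 ω.2) := by
  refine measurable_pi_lambda _ fun v => ?_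
  refine measurable_to_countable' fun c => ?_
  have h : (fun ω : (Z2.E → Bool) × (Z2.V → Bool) => ω.2 (Z2.rep idx ω.1 v)) ⁻¹' {c}
      = ⋃ u : Z2.V, ((fun ω : (Z2.E → Bool) × (Z2.V → Bool) => ω.1)
            ⁻¹' {η | Z2.rep idx η v = u}
          ∩ (fun ω : (Z2.E → Bool) × (Z2.V → Bool) => ω.2 u) ⁻¹' {c}) := by
    ext ω
    simp only [Set.mem_preimage, Set.mem_singleton_iff, Set.mem_iUnion, Set.mem_inter_iff,
      Set.mem_setOf_eq]
    constructor
    · intro h; exact ⟨Z2.rep idx ω.1 v, rfl, h⟩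
    · rintro ⟨u, h1, h2⟩; rw [h1]; exact h2
  show MeasurableSet ((fun ω : (Z2.E → Bool) × (Z2.V → Bool) => ω.2 (Z2.rep idx ω.1 v)) ⁻¹' {c})
  rw [h]
  exact MeasurableSet.iUnion fun u =>
    (measurable_fst (measurableSet_rep_eq idx hidx v u)).inter
      ((measurable_pi_apply u).comp measurable_snd (measurableSet_singleton c))

/-! #### The pattern of a bond configuration on a finite vertex set -/

variable (idx : Z2.V → ℕ) (s : Finset Z2.V) (A : Set (Z2.V → Bool))

noncomputable def extg (g : {x // x ∈ s} → Bool) : Z2.V → Bool :=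
  fun v => if h : v ∈ s then g ⟨v, h⟩ else false

noncomputable def pat (η : Z2.E → Bool) : {x // x ∈ s} → {x // x ∈ s} → Bool :=
  fun a b => if Z2.rep idx η ↑a = Z2.rep idx η ↑b then true else false

lemma pat_eq_true_iff (η : Z2.E → Bool) (a b : {x // x ∈ s}) :
    pat idx s η a b = true ↔ Z2.rep idx η ↑a = Z2.rep idx η ↑b := by
  unfold pat
  split_ifs with h
  · simp [h]
  · simp [h]

def Compat (e : {x // x ∈ s} → {x // x ∈ s} → Bool) (g : {x // x ∈ s} → Bool) : Prop :=
  ∀ a b, e a b = true → g a = g b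

def Canon (e : {x // x ∈ s} → {x // x ∈ s} → Bool) (a : {x // x ∈ s}) : Prop :=
  ∀ b, e a b = true → idx ↑a ≤ idx ↑b

noncomputable def psi (e : {x // x ∈ s} → {x // x ∈ s} → Bool) (r : ℝ) : ENNReal :=
  ∑ g : {x // x ∈ s} → Bool,
    if Compat s e g ∧ extg s g ∈ A then
      ∏ a : {x // x ∈ s}, (if Canon idx s e a then bw r (g a) else 1)
    else 0

noncomputable def psiPoly (e : {x // x ∈ s} → {x // x ∈ s} → Bool) : Polynomial ℝ :=
  ∑ g : {x // x ∈ s} → Bool,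
    if Compat s e g ∧ extg s g ∈ A then
      ∏ a : {x // x ∈ s},
        (if Canon idx s e a then (if g a then Polynomial.X else 1 - Polynomial.X) else 1)
    else 0

lemma psi_ne_top (e : {x // x ∈ s} → {x // x ∈ s} → Bool) (r : ℝ) :
    psi idx s A e r ≠ ⊤ := by
  unfold psi
  refine (ENNReal.sum_lt_top.2 fun g _ => ?_).ne
  split_ifs with h
  · exact ENNReal.prod_lt_top fun a _ => by
      split_ifs with h2
      · exact (bw_ne_top r (g a)).lt_top
      · exact ENNReal.one_lt_top
  · exact ENNReal.zero_lt_top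

lemma psi_toReal {r : ℝ} (hr : r ∈ Set.Icc (0:ℝ) 1)
    (e : {x // x ∈ s} → {x // x ∈ s} → Bool) :
    (psi idx s A e r).toReal = (psiPoly idx s A e).eval r := by
  unfold psi psiPoly
  rw [Polynomial.eval_finset_sum, ENNReal.toReal_sum]
  · refine Finset.sum_congr rfl fun g _ => ?_
    split_ifs with h
    · rw [Polynomial.eval_prod, ENNReal.toReal_prod]
      refine Finset.prod_congr rfl fun a _ => ?_
      split_ifs with h2 h3
      · simp [bw, h3, ENNReal.toReal_ofReal hr.1]
      · simp [bw, h3, ENNReal.toReal_ofReal (by linarith [hr.2] : (0:ℝ) ≤ 1 - r)]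
      · simp
    · simp
  · intro g _
    split_ifs with h
    · exact (ENNReal.prod_lt_top fun a _ => by
        split_ifs with h2
        · exact (bw_ne_top r (g a)).lt_top
        · exact ENNReal.one_lt_top).ne
    · simp

lemma measurableSet_pat_eq (hidx : Function.Injective idx)
    (e : {x // x ∈ s} → {x // x ∈ s} → Bool) :
    MeasurableSet {η : Z2.E → Bool | pat idx s η = e} := by
  have h : {η : Z2.E → Bool | pat idx s η = e}
      = ⋂ a : {x // x ∈ s}, ⋂ b : {x // x ∈ s},
          {η : Z2.E → Bool | pat idx s η a b = e a b} := by
    ext η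
    simp only [Set.mem_setOf_eq, Set.mem_iInter]
    constructor
    · intro h a b; rw [h]
    · intro h; funext a b; exact h a b
  rw [h]
  refine MeasurableSet.iInter fun a => MeasurableSet.iInter fun b => ?_
  rcases (Bool.eq_false_or_eq_true (e a b)).symm with hb | hb
  · have heq : {η : Z2.E → Bool | pat idx s η a b = e a b}
        = {η : Z2.E → Bool | Z2.rep idx η ↑a = Z2.rep idx η ↑b}ᶜ := by
      ext η
      simp only [Set.mem_setOf_eq, Set.mem_compl_iff, hb,
        ← pat_eq_true_iff idx s η a b]
      simp
    rw [heq]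
    exact (measurableSet_repLine idx hidx a b).compl
  · have heq : {η : Z2.E → Bool | pat idx s η a b = e a b}
        = {η : Z2.E → Bool | Z2.rep idx η ↑a = Z2.rep idx η ↑b} := by
      ext η
      simp only [Set.mem_setOf_eq, hb]
      exact pat_eq_true_iff idx s η a b
    rw [heq]
    exact measurableSet_repLine idx hidx a b

lemma measurableSet_of_determined
    (hs : ∀ ξ ξ' : Z2.V → Bool, (∀ v ∈ s, ξ v = ξ' v) → (ξ ∈ A ↔ ξ' ∈ A)) :
    MeasurableSet A := by
  have hres : Measurable (fun ξ : Z2.V → Bool => fun a : {x // x ∈ s} => ξ ↑a) :=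
    measurable_pi_lambda _ fun a => measurable_pi_apply _
  have himg : ∀ S' : Set ({x // x ∈ s} → Bool), MeasurableSet S' := by
    intro S'
    have h1 : S' = ⋃ f ∈ S', {f} := by simp
    rw [h1]
    refine MeasurableSet.biUnion (Set.to_countable _) fun f _ => ?_
    have h2 : ({f} : Set ({x // x ∈ s} → Bool))
        = ⋂ a, (fun g : {x // x ∈ s} → Bool => g a) ⁻¹' {f a} := by
      ext g; simp [funext_iff]
    rw [h2]
    exact MeasurableSet.iInter fun a => measurable_pi_apply a (measurableSet_singleton _)
  have hA' : A = (fun ξ : Z2.V → Bool => fun a : {x // x ∈ s} => ξ ↑a) ⁻¹'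
      ((fun ξ : Z2.V → Bool => fun a : {x // x ∈ s} => ξ ↑a) '' A) := by
    ext ξ
    constructor
    · exact fun h => ⟨ξ, h, rfl⟩
    · rintro ⟨ξ', hξ', heq⟩
      exact (hs ξ ξ' fun v hv => (congrFun heq ⟨v, hv⟩).symm).mpr hξ'
  rw [hA']
  exact hres (himg _)

set_option maxHeartbeats 2000000 in
lemma measure_color_event (hidx : Function.Injective idx)
    (hs : ∀ ξ ξ' : Z2.V → Bool, (∀ v ∈ s, ξ v = ξ' v) → (ξ ∈ A ↔ ξ' ∈ A))
    {r : ℝ} {ν : Measure (Z2.V → Bool)} (hν : IsBernoulli r ν)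
    (η : Z2.E → Bool) :
    ν {κ | Z2.color idx η κ ∈ A} = psi idx s A (pat idx s η) r := by
  classical
  set T : Finset Z2.V := s.image (fun v => Z2.rep idx η v) with hT
  have hmemT : ∀ v, v ∈ s → Z2.rep idx η v ∈ T := fun v h => Finset.mem_image_of_mem _ h
  set C : Set ({x // x ∈ T} → Bool) :=
    {f | (fun v => if h : v ∈ s then f ⟨Z2.rep idx η v, hmemT v h⟩ else false) ∈ A} with hC
  have hset : {κ : Z2.V → Bool | Z2.color idx η κ ∈ A}
      = {κ : Z2.V → Bool | (fun t : {x // x ∈ T} => κ ↑t) ∈ C} := by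
    ext κ
    simp only [Set.mem_setOf_eq, hC]
    refine hs _ _ fun v hv => ?_
    show κ (Z2.rep idx η v) = _
    rw [dif_pos hv]
  rw [hset, bernoulli_event hν T C]
  -- reindex the sum
  set e := pat idx s η with he
  set φ : ({x // x ∈ T} → Bool) → ({x // x ∈ s} → Bool) :=
    fun f a => f ⟨Z2.rep idx η ↑a, hmemT ↑a a.2⟩ with hφ
  have hφCompat : ∀ f, Compat s e (φ f) := by
    intro f a b hab
    have hrep := (pat_eq_true_iff idx s η a b).1 hab
    show f ⟨Z2.rep idx η ↑a, _⟩ = f ⟨Z2.rep idx η ↑b, _⟩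
    congr 1
    exact Subtype.ext hrep
  have hext : ∀ f, extg s (φ f)
      = (fun v => if h : v ∈ s then f ⟨Z2.rep idx η v, hmemT v h⟩ else false) := by
    intro f
    funext v
    unfold extg
    by_cases h : v ∈ s
    · rfl
    · rfl
  have hprod : ∀ f, (∏ t : {x // x ∈ T}, bw r (f t))
      = ∏ a : {x // x ∈ s}, (if Canon idx s e a then bw r (φ f a) else 1) := by
    intro f
    rw [← Finset.prod_filter]
    refine (Finset.prod_bij
      (fun (a : {x // x ∈ s}) (_ : a ∈ Finset.univ.filter (fun a => Canon idx s e a)) =>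
        (⟨Z2.rep idx η ↑a, hmemT ↑a a.2⟩ : {x // x ∈ T}))
      (fun a _ => Finset.mem_univ _) ?_ ?_ ?_).symm
    · intro a₁ h₁ a₂ h₂ heq
      have hrep : Z2.rep idx η ↑a₁ = Z2.rep idx η ↑a₂ := congrArg Subtype.val heq
      have h12 : e a₁ a₂ = true := (pat_eq_true_iff idx s η a₁ a₂).2 hrep
      have h21 : e a₂ a₁ = true := (pat_eq_true_iff idx s η a₂ a₁).2 hrep.symm
      have hc₁ : Canon idx s e a₁ := (Finset.mem_filter.mp h₁).2
      have hc₂ : Canon idx s e a₂ := (Finset.mem_filter.mp h₂).2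
      exact Subtype.ext (hidx (le_antisymm (hc₁ a₂ h12) (hc₂ a₁ h21)))
    · intro t _
      obtain ⟨v, hv, hrepv⟩ := Finset.mem_image.mp t.2
      have hUne : (s.filter (fun b => Z2.rep idx η b = ↑t)).Nonempty :=
        ⟨v, Finset.mem_filter.mpr ⟨hv, hrepv⟩⟩
      obtain ⟨b, hbU, hbmin⟩ := Finset.exists_min_image _ idx hUne
      have hbs : b ∈ s := (Finset.mem_filter.mp hbU).1
      have hbrep : Z2.rep idx η b = ↑t := (Finset.mem_filter.mp hbU).2
      refine ⟨⟨b, hbs⟩, ?_, ?_⟩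
      · refine Finset.mem_filter.mpr ⟨Finset.mem_univ _, ?_⟩
        intro c hc
        have hrepc : Z2.rep idx η b = Z2.rep idx η ↑c :=
          (pat_eq_true_iff idx s η ⟨b, hbs⟩ c).1 hc
        exact hbmin ↑c (Finset.mem_filter.mpr ⟨c.2, hrepc.symm.trans hbrep⟩)
      · exact Subtype.ext hbrep
    · intro a _
      rfl
  have hsum : (∑ f : {x // x ∈ T} → Bool,
        if f ∈ C then ∏ t : {x // x ∈ T}, bw r (f t) else 0)
      = ∑ g ∈ Finset.univ.filter (fun g => Compat s e g),
          (if extg s g ∈ A then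
            ∏ a : {x // x ∈ s}, (if Canon idx s e a then bw r (g a) else 1) else 0) := by
    refine Finset.sum_bij (fun f _ => φ f) ?_ ?_ ?_ ?_
    · intro f _
      exact Finset.mem_filter.mpr ⟨Finset.mem_univ _, hφCompat f⟩
    · intro f₁ _ f₂ _ heq
      funext t
      obtain ⟨v, hv, hrepv⟩ := Finset.mem_image.mp t.2
      have ht : t = ⟨Z2.rep idx η v, hmemT v hv⟩ := Subtype.ext hrepv.symm
      rw [ht]
      exact congrFun heq ⟨v, hv⟩
    · intro g hg
      have hgc : Compat s e g := (Finset.mem_filter.mp hg).2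
      refine ⟨fun t => g ⟨(Finset.mem_image.mp t.2).choose,
        (Finset.mem_image.mp t.2).choose_spec.1⟩, Finset.mem_univ _, ?_⟩
      funext a
      show g ⟨_, _⟩ = g a
      refine hgc _ _ ?_
      refine (pat_eq_true_iff idx s η _ a).2 ?_
      exact (Finset.mem_image.mp (hmemT ↑a a.2)).choose_spec.2
    · intro f _
      by_cases h : f ∈ C
      · have h' : (fun v => if hv : v ∈ s then f ⟨Z2.rep idx η v, hmemT v hv⟩ else false) ∈ A := h
        rw [if_pos h, if_pos (by rw [hext f]; exact h'), hprod f]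
      · have h' : ¬ ((fun v => if hv : v ∈ s then f ⟨Z2.rep idx η v, hmemT v hv⟩ else false) ∈ A) := h
        rw [if_neg h, if_neg (by rw [hext f]; exact h')]
  refine Eq.trans (Finset.sum_congr ?_ fun f _ => if_congr Iff.rfl rfl rfl) (hsum.trans ?_)
  · congr 1 <;> exact Subsingleton.elim _ _
  unfold psi
  rw [Finset.sum_filter]
  refine Finset.sum_congr rfl fun g _ => ?_
  split_ifs <;> first | rfl | tauto

end DaCPolyAux


/-- For fixed `p < 1/2`, the DaC probability on `Z²` of an event depending on the
colors of finitely many vertices is a polynomial in `r`. -/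
theorem dac_Z2_cylinder_polynomial_in_r
    (idx : Z2.V → ℕ) (hidx : Function.Injective idx)
    (νE : ℝ → Measure (Z2.E → Bool)) (νV : ℝ → Measure (Z2.V → Bool))
    (μ : ℝ → ℝ → Measure (Z2.V → Bool)) (hDaC : IsDaC Z2 idx νE νV μ)
    (p : ℝ) (hp : p ∈ Set.Ico (0:ℝ) (1/2))
    (A : Set (Z2.V → Bool))
    (hA : ∃ s : Finset Z2.V, ∀ ξ ξ' : Z2.V → Bool,
      (∀ v ∈ s, ξ v = ξ' v) → (ξ ∈ A ↔ ξ' ∈ A)) :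
    ∃ Q : Polynomial ℝ, ∀ r ∈ Set.Icc (0:ℝ) 1, (μ p r A).toReal = Q.eval r := by
  classical
  obtain ⟨s, hs⟩ := hA
  obtain ⟨hE, hV, hμ⟩ := hDaC
  have hpIcc : p ∈ Set.Icc (0:ℝ) 1 := ⟨hp.1, le_trans hp.2.le (by norm_num)⟩
  have hEb := hE p hpIcc
  haveI : IsProbabilityMeasure (νE p) := hEb.1
  refine ⟨∑ e : {x // x ∈ s} → {x // x ∈ s} → Bool,
      Polynomial.C ((νE p {η | pat idx s η = e}).toReal) * psiPoly idx s A e, ?_⟩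
  intro r hr
  have hVb := hV r hr
  haveI : IsProbabilityMeasure (νV r) := hVb.1
  have hAmeas : MeasurableSet A := measurableSet_of_determined s A hs
  have hF := measurable_colorMap idx hidx
  rw [hμ p r, Measure.map_apply hF hAmeas, Measure.prod_apply (hF hAmeas)]
  have hfib : ∀ η : Z2.E → Bool,
      νV r (Prod.mk η ⁻¹'
        ((fun ω : (Z2.E → Bool) × (Z2.V → Bool) => Z2.color idx ω.1 ω.2) ⁻¹' A))
      = psi idx s A (pat idx s η) r := fun η =>
    measure_color_event idx s A hidx hs hVb η
  rw [lintegral_congr hfib]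
  have hdec : ∀ η : Z2.E → Bool, psi idx s A (pat idx s η) r
      = ∑ e : {x // x ∈ s} → {x // x ∈ s} → Bool,
          Set.indicator {η' | pat idx s η' = e} (fun _ => psi idx s A e r) η := by
    intro η
    have hind : ∀ e : {x // x ∈ s} → {x // x ∈ s} → Bool,
        Set.indicator {η' | pat idx s η' = e} (fun _ => psi idx s A e r) η
        = if pat idx s η = e then psi idx s A e r else 0 := by
      intro e
      simp [Set.indicator_apply, Set.mem_setOf_eq]
    simp only [hind]
    rw [Finset.sum_ite_eq]
    simp
  rw [lintegral_congr hdec, lintegral_finset_sum]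
  · have hterm : ∀ e : {x // x ∈ s} → {x // x ∈ s} → Bool,
        ∫⁻ η, Set.indicator {η' | pat idx s η' = e} (fun _ => psi idx s A e r) η ∂(νE p)
        = psi idx s A e r * νE p {η' | pat idx s η' = e} := by
      intro e
      rw [lintegral_indicator (measurableSet_pat_eq idx s hidx e), setLIntegral_const]
    simp only [hterm]
    rw [ENNReal.toReal_sum (fun e _ =>
      ENNReal.mul_ne_top (psi_ne_top idx s A e r) (measure_ne_top _ _))]
    rw [Polynomial.eval_finset_sum]
    refine Finset.sum_congr rfl fun e _ => ?_
    rw [ENNReal.toReal_mul, Polynomial.eval_mul, Polynomial.eval_C, psi_toReal idx s A hr e]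
    ring
  · intro e _
    exact Measurable.indicator measurable_const (measurableSet_pat_eq idx s hidx e)
end

section
/- Let (D_n, a_n, b_n) be finite connected graphs with marked vertices and Γ_D the tree-like graph obtained from the rooted 3-regular tree T_3 by replacing each edge at level n by a copy of D_n (identifying the endpoint nearer the root with a_n and the other with b_n). Let h^{D_n}(p) be the ν_p-probability that a_n and b_n lie in the same bond cluster of D_n. If limsup_{n→∞} h^{D_n}(p) < 1/2, then p ≤ p_c^{Γ_D}; if liminf_{n→∞} h^{D_n}(p) > 1/2, then p ≥ p_c^{Γ_D}. -/
open MeasureTheory Filter Set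

attribute [local instance] Classical.propDecidable

/-- Probability of the event `A` under Bernoulli(`p`) bond percolation on a finite
edge set. -/
noncomputable def bprob {E : Type} [Fintype E] [DecidableEq E] (p : ℝ) (A : Set (E → Bool)) : ℝ :=
  ∑ η : E → Bool, if η ∈ A then ∏ e : E, (if η e then p else 1 - p) else 0

namespace Multigraph

/-- The minimal vertex of the bond cluster of `v` (finite graphs). -/
noncomputable def minRep (D : Multigraph) [Fintype D.V] [LinearOrder D.V]
    (η : D.E → Bool) (v : D.V) : D.V :=
  ((Set.toFinite (D.cluster η v)).toFinset).min'
    (by rw [Set.Finite.toFinset_nonempty]; exact ⟨v, Relation.ReflTransGen.refl⟩)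

/-- Probability of an event `A` (depending on the bond configuration and the induced
coloring) in the divide-and-color model on a finite graph `D`. -/
noncomputable def dacProb (D : Multigraph) [Fintype D.E] [DecidableEq D.E]
    [Fintype D.V] [LinearOrder D.V] (p r : ℝ)
    (A : Set ((D.E → Bool) × (D.V → Bool))) : ℝ :=
  ∑ η : D.E → Bool, ∑ κ : D.V → Bool,
    ((∏ e : D.E, if η e then p else 1 - p) * (∏ v : D.V, if κ v then r else 1 - r)) *
      (if (η, fun v => κ (D.minRep η v)) ∈ A then 1 else 0)

/-- The event `E_{a,b}`: the bond cluster of `a` is pivotal for the existence of a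
black path from `a` to `b`; that is, either `a` and `b` are in the same bond cluster,
or they are in different bond clusters but some vertex at distance 1 from the cluster
of `a` is connected to `b` by a black path. -/
def PivEvent (D : Multigraph) (a b : D.V) : Set ((D.E → Bool) × (D.V → Bool)) :=
  {ω | D.OpenConn ω.1 a b ∨
    (¬ D.OpenConn ω.1 a b ∧ ∃ v, v ∉ D.cluster ω.1 a ∧
      (∃ u ∈ D.cluster ω.1 a, D.Adj u v) ∧ D.BlackConn ω.2 v b)}

/-- `h^D(p)`: probability that `a` and `b` are in the same bond cluster. -/
noncomputable def hprob (D : Multigraph) [Fintype D.E] [DecidableEq D.E]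
    (a b : D.V) (p : ℝ) : ℝ :=
  bprob p {η | D.OpenConn η a b}

/-- `f^D(p,r)`: DaC probability of the pivotality event `E_{a,b}`. -/
noncomputable def fprob (D : Multigraph) [Fintype D.E] [DecidableEq D.E]
    [Fintype D.V] [LinearOrder D.V] (a b : D.V) (p r : ℝ) : ℝ :=
  D.dacProb p r (D.PivEvent a b)

end Multigraph

/-! ### The rooted 3-regular tree and the tree-like substitution construction -/

/-- Vertices of the rooted 3-regular tree `T₃`: the root is `none`; any other
vertex is reached by first choosing one of the 3 subtrees of the root and then
following a binary path. -/
abbrev V3 : Type := Option (Fin 3 × List (Fin 2))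

/-- Edges of `T₃`, indexed by their endpoint `s e` farther from the root. -/
abbrev E3 : Type := Fin 3 × List (Fin 2)

/-- The level of the edge `e`, i.e. the distance from `s e` to the root. -/
def levelE (e : E3) : ℕ := e.2.length + 1

/-- The endpoint of the edge `e` closer to the root (`f(e)`). -/
def parentV (e : E3) : V3 := if e.2 = [] then none else some (e.1, e.2.dropLast)

/-- Adjacency in the tree `T₃`. -/
def T3Adj (x y : V3) : Prop :=
  ∃ e : E3, (x = parentV e ∧ y = some e) ∨ (y = parentV e ∧ x = some e)

/-- The vertices of `D` other than the two marked ones. -/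
def interiorV (D : Multigraph) (a b : D.V) : Type := {v : D.V // v ≠ a ∧ v ≠ b}

/-- Embedding of the vertex set of the copy of `D (levelE e)` replacing the tree
edge `e` into the vertex set of the tree-like graph `Γ_D`: the marked vertex `a`
goes to the endpoint of `e` closer to the root, `b` to the farther endpoint, and the
other vertices to fresh interior vertices. -/
noncomputable def embedV (D : ℕ → Multigraph) (a b : ∀ n, (D n).V) (e : E3)
    (v : (D (levelE e)).V) :
    V3 ⊕ Σ e' : E3, interiorV (D (levelE e')) (a (levelE e')) (b (levelE e')) :=
  if h : v = a (levelE e) then Sum.inl (parentV e)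
  else if h' : v = b (levelE e) then Sum.inl (some e)
  else Sum.inr ⟨e, ⟨v, h, h'⟩⟩

/-- The tree-like graph `Γ_D` obtained from the rooted 3-regular tree by replacing
every edge at level `n` by a copy of `D n`, the endpoint nearer the root being
identified with `a n` and the other one with `b n`. -/
@[reducible] noncomputable def GammaD (D : ℕ → Multigraph) (a b : ∀ n, (D n).V) : Multigraph where
  V := V3 ⊕ Σ e : E3, interiorV (D (levelE e)) (a (levelE e)) (b (levelE e))
  E := Σ e : E3, (D (levelE e)).E
  ends := fun ed =>
    (embedV D a b ed.1 ((D (levelE ed.1)).ends ed.2).1,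
     embedV D a b ed.1 ((D (levelE ed.1)).ends ed.2).2)

/-- The copy of the root `ρ` in `Γ_D`. -/
noncomputable def rootV (D : ℕ → Multigraph) (a b : ∀ n, (D n).V) : (GammaD D a b).V :=
  Sum.inl none



section Bern
variable {E : Type} [DecidableEq E] {p : ℝ} {ν : Measure (E → Bool)}

/-- An event depends only on the coordinates in `S`. -/
def EvLocal (S : Finset E) (A : Set (E → Bool)) : Prop :=
  ∀ ω ω' : E → Bool, (∀ i ∈ S, ω i = ω' i) → (ω ∈ A ↔ ω' ∈ A)

lemma EvLocal.mono {S S' : Finset E} {A : Set (E → Bool)} (h : EvLocal S A) (hS : S ⊆ S') :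
    EvLocal S' A := fun ω ω' hagree => h ω ω' (fun i hi => hagree i (hS hi))

lemma EvLocal.compl {S : Finset E} {A : Set (E → Bool)} (h : EvLocal S A) :
    EvLocal S Aᶜ := fun ω ω' hagree => not_congr (h ω ω' hagree)

lemma EvLocal.inter {S₁ S₂ : Finset E} {A₁ A₂ : Set (E → Bool)}
    (h₁ : EvLocal S₁ A₁) (h₂ : EvLocal S₂ A₂) : EvLocal (S₁ ∪ S₂) (A₁ ∩ A₂) := by
  intro ω ω' hagree
  have e1 := h₁ ω ω' (fun i hi => hagree i (Finset.mem_union_left _ hi))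
  have e2 := h₂ ω ω' (fun i hi => hagree i (Finset.mem_union_right _ hi))
  exact and_congr e1 e2

/-- representative configuration of a finite set `T`. -/
def reprC (T : Finset E) : E → Bool := fun i => decide (i ∈ T)

lemma cyl_measurable (S : Finset E) (f : E → Bool) :
    MeasurableSet {ω : E → Bool | ∀ i ∈ S, ω i = f i} := by
  have : {ω : E → Bool | ∀ i ∈ S, ω i = f i} = ⋂ i ∈ (S : Set E), {ω : E → Bool | ω i = f i} := by
    ext ω; simp
  rw [this]
  refine MeasurableSet.biInter (S.countable_toSet) (fun i _ => ?_)
  have h2 : {ω : E → Bool | ω i = f i} = (fun ω : E → Bool => ω i) ⁻¹' {f i} := rfl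
  rw [h2]
  exact (measurable_pi_apply i) (measurableSet_singleton (f i))

lemma local_measurableSet {S : Finset E} {A : Set (E → Bool)} (hA : EvLocal S A) :
    MeasurableSet A := by
  have hdecomp : A = ⋃ T ∈ S.powerset.filter (fun T => reprC T ∈ A),
      {ω : E → Bool | ∀ i ∈ S, ω i = reprC T i} := by
    ext ω
    simp only [Set.mem_iUnion, Finset.mem_filter, Finset.mem_powerset, exists_prop]
    constructor
    · intro hω
      refine ⟨S.filter (fun i => ω i = true), ⟨Finset.filter_subset _ _, ?_⟩, ?_⟩
      · refine (hA ω _ ?_).mp hω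
        intro i hi
        simp only [reprC, Finset.mem_filter, hi, true_and]
        cases h : ω i <;> simp [h]
      · intro i hi
        simp only [reprC, Finset.mem_filter, hi, true_and]
        cases h : ω i <;> simp [h]
    · rintro ⟨T, ⟨-, hT⟩, hω⟩
      exact (hA ω (reprC T) hω).mpr hT
  rw [hdecomp]
  exact MeasurableSet.biUnion (Finset.countable_toSet _)
    (fun T _ => cyl_measurable S (reprC T))

/-- Decomposition of the measure of a local event into cylinder probabilities. -/
lemma bern_local_eq (hν : IsBernoulli p ν) (S : Finset E) (A : Set (E → Bool))
    (hA : EvLocal S A) :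
    ν A = ∑ T ∈ S.powerset.filter (fun T => reprC T ∈ A),
      ∏ i ∈ S, ENNReal.ofReal (if i ∈ T then p else 1 - p) := by
  have hdecomp : A = ⋃ T ∈ S.powerset.filter (fun T => reprC T ∈ A),
      {ω : E → Bool | ∀ i ∈ S, ω i = reprC T i} := by
    ext ω
    simp only [Set.mem_iUnion, Finset.mem_filter, Finset.mem_powerset, exists_prop]
    constructor
    · intro hω
      refine ⟨S.filter (fun i => ω i = true), ⟨Finset.filter_subset _ _, ?_⟩, ?_⟩
      · refine (hA ω _ ?_).mp hω
        intro i hi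
        simp only [reprC, Finset.mem_filter, hi, true_and]
        cases h : ω i <;> simp [h]
      · intro i hi
        simp only [reprC, Finset.mem_filter, hi, true_and]
        cases h : ω i <;> simp [h]
    · rintro ⟨T, ⟨-, hT⟩, hω⟩
      exact (hA ω (reprC T) hω).mpr hT
  have hdisj : (↑(S.powerset.filter (fun T => reprC T ∈ A)) : Set (Finset E)).PairwiseDisjoint
      (fun T => {ω : E → Bool | ∀ i ∈ S, ω i = reprC T i}) := by
    intro T₁ h₁ T₂ h₂ hne
    simp only [Finset.coe_filter, Set.mem_setOf_eq, Finset.mem_powerset] at h₁ h₂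
    refine Set.disjoint_left.mpr (fun ω hω₁ hω₂ => hne ?_)
    apply Finset.ext
    intro i
    by_cases hi : i ∈ S
    · have e1 := hω₁ i hi
      have e2 := hω₂ i hi
      simp only [reprC] at e1 e2
      constructor <;> intro h
      · have : decide (i ∈ T₁) = true := by simp [h]
        rw [← e1, e2] at this; simpa using this
      · have : decide (i ∈ T₂) = true := by simp [h]
        rw [← e2, e1] at this; simpa using this
    · constructor <;> intro h
      · exact absurd (h₁.1 h) hi
      · exact absurd (h₂.1 h) hi
  conv_lhs => rw [hdecomp]
  rw [measure_biUnion_finset hdisj (fun T _ => cyl_measurable S (reprC T))]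
  refine Finset.sum_congr rfl (fun T hT => ?_)
  rw [hν.2 S (reprC T)]
  refine Finset.prod_congr rfl (fun i _ => ?_)
  simp [reprC]

/-- Independence of two events with disjoint supports. -/
lemma bern_inter_local (hν : IsBernoulli p ν) {S₁ S₂ : Finset E} (hd : Disjoint S₁ S₂)
    {A₁ A₂ : Set (E → Bool)} (h₁ : EvLocal S₁ A₁) (h₂ : EvLocal S₂ A₂) :
    ν (A₁ ∩ A₂) = ν A₁ * ν A₂ := by
  rw [bern_local_eq hν S₁ A₁ h₁, bern_local_eq hν S₂ A₂ h₂,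
    bern_local_eq hν (S₁ ∪ S₂) (A₁ ∩ A₂) (h₁.inter h₂), Finset.sum_mul_sum]
  rw [← Finset.sum_product']
  refine Finset.sum_nbij' (fun T => (T ∩ S₁, T ∩ S₂)) (fun P => P.1 ∪ P.2) ?_ ?_ ?_ ?_ ?_
  · -- maps to
    intro T hT
    simp only [Finset.mem_filter, Finset.mem_powerset] at hT
    have hsub := hT.1
    have hmem1 : reprC T ∈ A₁ := hT.2.1
    have hmem2 : reprC T ∈ A₂ := hT.2.2
    have a1 : reprC (T ∩ S₁) ∈ A₁ := by
      refine (h₁ (reprC T) _ ?_).mp hmem1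
      intro i hi; simp [reprC, Finset.mem_inter, hi]
    have a2 : reprC (T ∩ S₂) ∈ A₂ := by
      refine (h₂ (reprC T) _ ?_).mp hmem2
      intro i hi; simp [reprC, Finset.mem_inter, hi]
    simp only [Finset.mem_product, Finset.mem_filter, Finset.mem_powerset]
    exact ⟨⟨Finset.inter_subset_right, a1⟩, ⟨Finset.inter_subset_right, a2⟩⟩
  · -- maps back
    rintro ⟨T₁, T₂⟩ hP
    simp only [Finset.mem_product, Finset.mem_filter, Finset.mem_powerset] at hP
    obtain ⟨⟨hs1, hm1⟩, ⟨hs2, hm2⟩⟩ := hP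
    have a1 : reprC (T₁ ∪ T₂) ∈ A₁ := by
      refine (h₁ (reprC T₁) _ ?_).mp hm1
      intro i hi
      have : i ∉ T₂ := fun hiT => (Finset.disjoint_left.mp hd hi) (hs2 hiT)
      simp [reprC, Finset.mem_union, this]
    have a2 : reprC (T₁ ∪ T₂) ∈ A₂ := by
      refine (h₂ (reprC T₂) _ ?_).mp hm2
      intro i hi
      have : i ∉ T₁ := fun hiT => (Finset.disjoint_left.mp hd (hs1 hiT)) hi
      simp [reprC, Finset.mem_union, this]
    simp only [Finset.mem_filter, Finset.mem_powerset]
    exact ⟨Finset.union_subset (hs1.trans Finset.subset_union_left)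
      (hs2.trans Finset.subset_union_right), a1, a2⟩
  · -- left inverse
    intro T hT
    simp only [Finset.mem_filter, Finset.mem_powerset] at hT
    have : T ∩ S₁ ∪ T ∩ S₂ = T := by
      rw [← Finset.inter_union_distrib_left]
      exact Finset.inter_eq_left.mpr hT.1
    simpa using this
  · -- right inverse
    rintro ⟨T₁, T₂⟩ hP
    simp only [Finset.mem_product, Finset.mem_filter, Finset.mem_powerset] at hP
    obtain ⟨⟨hs1, -⟩, ⟨hs2, -⟩⟩ := hP
    have e1 : (T₁ ∪ T₂) ∩ S₁ = T₁ := by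
      rw [Finset.union_inter_distrib_right, Finset.inter_eq_left.mpr hs1]
      have : T₂ ∩ S₁ = ∅ := by
        apply Finset.eq_empty_of_forall_notMem
        intro i hi
        rw [Finset.mem_inter] at hi
        exact (Finset.disjoint_left.mp hd hi.2) (hs2 hi.1)
      simp [this]
    have e2 : (T₁ ∪ T₂) ∩ S₂ = T₂ := by
      rw [Finset.union_inter_distrib_right, Finset.inter_eq_left.mpr hs2]
      have : T₁ ∩ S₂ = ∅ := by
        apply Finset.eq_empty_of_forall_notMem
        intro i hi
        rw [Finset.mem_inter] at hi
        exact (Finset.disjoint_left.mp hd (hs1 hi.1)) hi.2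
      simp [this]
    simp [e1, e2]
  · -- value equality
    intro T hT
    simp only [Finset.mem_filter, Finset.mem_powerset] at hT
    rw [Finset.prod_union hd]
    congr 1
    · refine Finset.prod_congr rfl (fun i hi => ?_)
      congr 1
      simp [Finset.mem_inter, hi]
    · refine Finset.prod_congr rfl (fun i hi => ?_)
      congr 1
      simp [Finset.mem_inter, hi]

/-- Product formula over a finite family of events with pairwise disjoint supports. -/
lemma bern_finset_prod (hν : IsBernoulli p ν) {ι : Type} (F : Finset ι)
    (S : ι → Finset E) (A : ι → Set (E → Bool))
    (hd : ∀ i ∈ F, ∀ j ∈ F, i ≠ j → Disjoint (S i) (S j))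
    (hl : ∀ i ∈ F, EvLocal (S i) (A i)) :
    ν (⋂ i ∈ (F : Set ι), A i) = ∏ i ∈ F, ν (A i) := by
  classical
  induction F using Finset.induction_on with
  | empty => simp [hν.1.measure_univ]
  | @insert i₀ F hi₀ ih =>
    have hbig : EvLocal (F.biUnion S) (⋂ i ∈ (F : Set ι), A i) := by
      intro ω ω' hagree
      simp only [Set.mem_iInter]
      constructor <;> intro h i hi
      · exact (hl i (Finset.mem_insert_of_mem hi) ω ω' (fun j hj =>
          hagree j (Finset.mem_biUnion.mpr ⟨i, hi, hj⟩))).mp (h i hi)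
      · exact (hl i (Finset.mem_insert_of_mem hi) ω ω' (fun j hj =>
          hagree j (Finset.mem_biUnion.mpr ⟨i, hi, hj⟩))).mpr (h i hi)
    have hdisj : Disjoint (S i₀) (F.biUnion S) := by
      rw [Finset.disjoint_biUnion_right]
      intro j hj
      exact hd i₀ (Finset.mem_insert_self _ _) j (Finset.mem_insert_of_mem hj)
        (fun h => hi₀ (h ▸ hj))
    have hset : (⋂ i ∈ ((insert i₀ F : Finset ι) : Set ι), A i)
        = A i₀ ∩ ⋂ i ∈ (F : Set ι), A i := by
      simp [Set.biInter_insert]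
    rw [hset, bern_inter_local hν hdisj (hl i₀ (Finset.mem_insert_self _ _)) hbig,
      Finset.prod_insert hi₀, ih (fun i hi j hj hne =>
        hd i (Finset.mem_insert_of_mem hi) j (Finset.mem_insert_of_mem hj) hne)
        (fun i hi => hl i (Finset.mem_insert_of_mem hi))]
end Bern


lemma evLocal_pullback {E E₀ : Type} [Fintype E₀] (φ : E₀ ↪ E) (A₀ : Set (E₀ → Bool)) :
    EvLocal (Finset.univ.map φ) {ω : E → Bool | (fun d => ω (φ d)) ∈ A₀} := by
  intro ω ω' hagree
  have : (fun d => ω (φ d)) = (fun d => ω' (φ d)) := by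
    funext d
    exact hagree (φ d) (Finset.mem_map_of_mem φ (Finset.mem_univ d))
  simp only [Set.mem_setOf_eq, this]

lemma bern_local_embed {E : Type} [DecidableEq E] {p : ℝ} {ν : Measure (E → Bool)}
    (hν : IsBernoulli p ν) (hp : 0 ≤ p) (hp1 : p ≤ 1)
    {E₀ : Type} [Fintype E₀] [DecidableEq E₀] (φ : E₀ ↪ E) (A₀ : Set (E₀ → Bool)) :
    ν {ω | (fun d => ω (φ d)) ∈ A₀} = ENNReal.ofReal (bprob p A₀) := by
  rw [bern_local_eq hν (Finset.univ.map φ) _ (evLocal_pullback φ A₀)]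
  have hnn : ∀ η : E₀ → Bool, 0 ≤ (if η ∈ A₀ then ∏ e : E₀, (if η e then p else 1 - p) else 0) := by
    intro η
    split
    · exact Finset.prod_nonneg (fun e _ => by split <;> linarith)
    · exact le_refl 0
  rw [bprob, ENNReal.ofReal_sum_of_nonneg (fun η _ => hnn η)]
  simp only [apply_ite ENNReal.ofReal, ENNReal.ofReal_zero]
  rw [← Finset.sum_filter]
  refine Finset.sum_nbij' (fun T => fun d => decide (φ d ∈ T))
    (fun η => (Finset.univ.filter (fun d => η d = true)).map φ) ?_ ?_ ?_ ?_ ?_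
  · intro T hT
    simp only [Finset.mem_filter, Finset.mem_powerset] at hT
    simp only [Finset.mem_filter, Finset.mem_univ, true_and]
    exact hT.2
  · intro η hη
    simp only [Finset.mem_filter, Finset.mem_univ, true_and] at hη
    simp only [Finset.mem_filter, Finset.mem_powerset]
    constructor
    · intro x hx
      simp only [Finset.mem_map, Finset.mem_filter] at hx
      obtain ⟨d, -, rfl⟩ := hx
      exact Finset.mem_map_of_mem φ (Finset.mem_univ d)
    · have heq : (fun d => decide (φ d ∈ (Finset.univ.filter (fun d => η d = true)).map φ)) = η := by
        funext d
        have : φ d ∈ (Finset.univ.filter (fun d => η d = true)).map φ ↔ η d = true := by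
          simp only [Finset.mem_map, Finset.mem_filter, Finset.mem_univ, true_and]
          constructor
          · rintro ⟨d', hd', he⟩
            rwa [φ.injective he] at hd'
          · intro h; exact ⟨d, h, rfl⟩
        cases h : η d
        · simpa [h] using (by simp [this, h] : ¬ (φ d ∈ _))
        · simp [this, h]
      show reprC _ ∈ {ω : E → Bool | (fun d => ω (φ d)) ∈ A₀}
      simp only [Set.mem_setOf_eq, reprC]
      rw [heq]
      exact hη
  · intro T hT
    simp only [Finset.mem_filter, Finset.mem_powerset] at hT
    apply Finset.ext
    intro x
    simp only [Finset.mem_map, Finset.mem_filter, Finset.mem_univ, true_and]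
    constructor
    · rintro ⟨d, hd, rfl⟩
      simpa using hd
    · intro hx
      obtain ⟨d, -, rfl⟩ := Finset.mem_map.mp (hT.1 hx)
      exact ⟨d, by simpa using hx, rfl⟩
  · intro η hη
    funext d
    simp only [Finset.mem_map, Finset.mem_filter, Finset.mem_univ, true_and]
    cases h : η d
    · simp only [decide_eq_false_iff_not]
      rintro ⟨d', hd', he⟩
      rw [φ.injective he] at hd'
      rw [h] at hd'; exact Bool.false_ne_true hd'
    · simp only [decide_eq_true_eq]
      exact ⟨d, h, rfl⟩
  · intro T hT
    simp only [Finset.mem_filter, Finset.mem_powerset] at hT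
    have hmem : reprC T ∈ {ω : E → Bool | (fun d => ω (φ d)) ∈ A₀} := hT.2
    have hA : (fun d => decide (φ d ∈ T)) ∈ A₀ := hmem
    beta_reduce
    rw [ENNReal.ofReal_prod_of_nonneg (fun e _ => by split <;> linarith)]
    rw [Finset.prod_map]
    refine Finset.prod_congr rfl (fun d _ => ?_)
    simp only [Function.Embedding.coeFn_mk, decide_eq_true_eq]
    by_cases h : φ d ∈ T
    · simp [h]
    · simp [h]


/-! ### graph layer lemmas -/

namespace Multigraph
variable {G : Multigraph} {η : G.E → Bool}

lemma openConn_symm : Symmetric (G.OpenConn η) := by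
  intro x y hxy
  refine @Std.Symm.symm _ _ (@Relation.ReflTransGen.symmetric _ _ ⟨?_⟩) x y hxy
  rintro x y ⟨e, he, hor⟩
  exact ⟨e, he, hor.symm⟩

lemma openConn_trans {x y z : G.V} (h1 : G.OpenConn η x y) (h2 : G.OpenConn η y z) :
    G.OpenConn η x z := Relation.ReflTransGen.trans h1 h2

end Multigraph

section TreeLike
variable (D : ℕ → Multigraph) (a b : ∀ n, (D n).V)

/-- a-b connectivity inside the copy of the tree edge `e`. -/
def LocAB (ω : (GammaD D a b).E → Bool) (e : E3) : Prop :=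
  (D (levelE e)).OpenConn (fun d => ω ⟨e, d⟩) (a (levelE e)) (b (levelE e))

lemma embedV_a (e : E3) : embedV D a b e (a (levelE e)) = Sum.inl (parentV e) := by
  simp [embedV]

lemma embedV_b (hab : ∀ n, a n ≠ b n) (e : E3) :
    embedV D a b e (b (levelE e)) = Sum.inl (some e) := by
  simp [embedV, (hab (levelE e)).symm, Ne.symm (hab (levelE e))]

lemma gamma_ends (e : E3) (d : (D (levelE e)).E) :
    (GammaD D a b).ends ⟨e, d⟩ =
      (embedV D a b e ((D (levelE e)).ends d).1, embedV D a b e ((D (levelE e)).ends d).2) := rfl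

lemma embed_conn {ω : (GammaD D a b).E → Bool} {e : E3} {x y : (D (levelE e)).V}
    (h : (D (levelE e)).OpenConn (fun d => ω ⟨e, d⟩) x y) :
    (GammaD D a b).OpenConn ω (embedV D a b e x) (embedV D a b e y) := by
  induction h with
  | refl => exact Relation.ReflTransGen.refl
  | tail hxy hstep ih =>
    obtain ⟨d, hd, hor⟩ := hstep
    refine ih.tail ⟨⟨e, d⟩, hd, ?_⟩
    rcases hor with h | h
    · left; rw [gamma_ends, h]
    · right; rw [gamma_ends, h]

lemma locAB_conn (hab : ∀ n, a n ≠ b n) {ω : (GammaD D a b).E → Bool} {e : E3}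
    (h : LocAB D a b ω e) :
    (GammaD D a b).OpenConn ω (Sum.inl (parentV e)) (Sum.inl (some e)) := by
  have := embed_conn D a b h
  rwa [embedV_a, embedV_b D a b hab] at this

/-! ### below relation -/

def BelowE (e e' : E3) : Prop := e.1 = e'.1 ∧ e.2 <+: e'.2

def BelowV (e : E3) (v : V3) : Prop := ∃ e', v = some e' ∧ BelowE e e'

lemma belowE_refl (e : E3) : BelowE e e := ⟨rfl, List.prefix_rfl⟩

lemma belowE_trans {e e' e'' : E3} (h1 : BelowE e e') (h2 : BelowE e' e'') : BelowE e e'' :=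
  ⟨h1.1.trans h2.1, h1.2.trans h2.2⟩

lemma belowE_antisymm {e e' : E3} (h1 : BelowE e e') (h2 : BelowE e' e) : e = e' := by
  obtain ⟨he, hp⟩ := h1
  obtain ⟨-, hp'⟩ := h2
  exact Prod.ext he (hp.eq_of_length (le_antisymm hp.length_le hp'.length_le))

lemma belowE_level {e e' : E3} (h : BelowE e e') : levelE e ≤ levelE e' := by
  have := h.2.length_le
  simp only [levelE]
  omega

lemma belowV_none (e : E3) : ¬ BelowV e none := by rintro ⟨e', h, -⟩; exact nomatch h

lemma belowV_some (e e' : E3) : BelowV e (some e') ↔ BelowE e e' := by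
  constructor
  · rintro ⟨e'', h, hb⟩
    obtain rfl : e' = e'' := Option.some_injective _ h
    exact hb
  · intro h; exact ⟨e', rfl, h⟩

def levelV : V3 → ℕ
  | none => 0
  | some e => levelE e

lemma belowV_level {e : E3} {v : V3} (h : BelowV e v) : levelE e ≤ levelV v := by
  obtain ⟨e', rfl, hb⟩ := h
  exact belowE_level hb

lemma below_parent {e e' : E3} (hne : e ≠ e') : BelowV e (parentV e') ↔ BelowE e e' := by
  unfold parentV
  by_cases h : e'.2 = []
  · rw [if_pos h]
    simp only [belowV_none e, false_iff]
    rintro ⟨h1, h2⟩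
    rw [h] at h2
    exact hne (Prod.ext h1 ((List.prefix_nil.mp h2).trans h.symm))
  · rw [if_neg h, belowV_some]
    constructor
    · rintro ⟨h1, h2⟩
      exact ⟨h1, h2.trans (List.dropLast_prefix _)⟩
    · rintro ⟨h1, h2⟩
      refine ⟨h1, ?_⟩
      have hne2 : e.2 ≠ e'.2 := fun hh => hne (Prod.ext h1 hh)
      have hlt : e.2.length < e'.2.length := lt_of_le_of_ne h2.length_le
        (fun hh => hne2 (List.IsPrefix.eq_of_length h2 hh))
      rw [List.prefix_iff_eq_take] at h2 ⊢
      rw [List.dropLast_eq_take, List.take_take]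
      rw [min_eq_left (by omega)]
      exact h2

lemma not_belowV_parent_self (e : E3) : ¬ BelowV e (parentV e) := by
  unfold parentV
  by_cases h : e.2 = []
  · rw [if_pos h]; exact belowV_none e
  · rw [if_neg h, belowV_some]
    rintro ⟨-, h2⟩
    have := h2.length_le
    rw [List.length_dropLast] at this
    have : e.2.length = 0 := by omega
    exact h (List.length_eq_zero_iff.mp this)

end TreeLike

section Sep
variable (D : ℕ → Multigraph) (a b : ∀ n, (D n).V)

/-- Indicator of being on the far side of the tree edge `e`, extended through
the copy of `e` by local connectivity to `b`. -/
noncomputable def sepFun (e : E3) (ω : (GammaD D a b).E → Bool) : (GammaD D a b).V → Prop :=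
  fun z =>
    match z with
    | Sum.inl v => BelowV e v
    | Sum.inr ⟨e', x⟩ =>
        if h : e' = e then
          (D (levelE e)).OpenConn (fun d => ω ⟨e, d⟩) (h ▸ x.1) (b (levelE e))
        else BelowE e e'

variable (hab : ∀ n, a n ≠ b n)

lemma sepFun_inl (e : E3) (ω : (GammaD D a b).E → Bool) (v : V3) :
    sepFun D a b e ω (Sum.inl v) = BelowV e v := rfl

lemma sepFun_embed_ne {e e' : E3} (hne : e ≠ e') (ω : (GammaD D a b).E → Bool)
    (v : (D (levelE e')).V) :
    sepFun D a b e ω (embedV D a b e' v) ↔ BelowE e e' := by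
  unfold embedV
  by_cases h1 : v = a (levelE e')
  · rw [dif_pos h1, sepFun_inl]
    exact below_parent hne
  · by_cases h2 : v = b (levelE e')
    · rw [dif_neg h1, dif_pos h2, sepFun_inl, belowV_some]
    · rw [dif_neg h1, dif_neg h2]
      show (if h : e' = e then _ else BelowE e e') ↔ _
      rw [dif_neg (Ne.symm hne)]

lemma sepFun_embed_eq {e : E3} {ω : (GammaD D a b).E → Bool}
    (hcl : ¬ LocAB D a b ω e) (v : (D (levelE e)).V) :
    sepFun D a b e ω (embedV D a b e v) ↔
      (D (levelE e)).OpenConn (fun d => ω ⟨e, d⟩) v (b (levelE e)) := by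
  unfold embedV
  by_cases h1 : v = a (levelE e)
  · rw [dif_pos h1, sepFun_inl]
    constructor
    · intro h; exact absurd h (not_belowV_parent_self e)
    · intro h; subst h1; exact absurd h hcl
  · by_cases h2 : v = b (levelE e)
    · rw [dif_neg h1, dif_pos h2, sepFun_inl, belowV_some]
      subst h2
      exact iff_of_true (belowE_refl e) Relation.ReflTransGen.refl
    · rw [dif_neg h1, dif_neg h2]
      show (if h : e = e then
          (D (levelE e)).OpenConn (fun d => ω ⟨e, d⟩) (h ▸ v) (b (levelE e)) else _) ↔ _
      rw [dif_pos rfl]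

lemma sepFun_step {e : E3} {ω : (GammaD D a b).E → Bool} (hcl : ¬ LocAB D a b ω e)
    {x y : (GammaD D a b).V}
    (hs : ∃ ed, ω ed = true ∧
      ((GammaD D a b).ends ed = (x, y) ∨ (GammaD D a b).ends ed = (y, x))) :
    sepFun D a b e ω x ↔ sepFun D a b e ω y := by
  obtain ⟨⟨e', d⟩, hopen, hor⟩ := hs
  rw [gamma_ends] at hor
  have key : sepFun D a b e ω (embedV D a b e' ((D (levelE e')).ends d).1) ↔
      sepFun D a b e ω (embedV D a b e' ((D (levelE e')).ends d).2) := by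
    by_cases he : e' = e
    · subst he
      rw [sepFun_embed_eq D a b hcl, sepFun_embed_eq D a b hcl]
      have hstep : (D (levelE e')).OpenConn (fun d' => ω ⟨e', d'⟩)
          ((D (levelE e')).ends d).1 ((D (levelE e')).ends d).2 :=
        Relation.ReflTransGen.single ⟨d, hopen, Or.inl rfl⟩
      constructor
      · intro h; exact Multigraph.openConn_trans (Multigraph.openConn_symm hstep) h
      · intro h; exact Multigraph.openConn_trans hstep h
    · rw [sepFun_embed_ne D a b (Ne.symm he), sepFun_embed_ne D a b (Ne.symm he)]
  rcases hor with h | h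
  · injection h with h1 h2
    rw [← h1, ← h2]
    exact key
  · injection h with h1 h2
    rw [← h1, ← h2]
    exact key.symm

end Sep

section Bridge
variable (D : ℕ → Multigraph) (a b : ∀ n, (D n).V)

lemma sepFun_conn {e : E3} {ω : (GammaD D a b).E → Bool} (hcl : ¬ LocAB D a b ω e)
    {x y : (GammaD D a b).V} (h : (GammaD D a b).OpenConn ω x y) :
    sepFun D a b e ω x ↔ sepFun D a b e ω y := by
  induction h with
  | refl => exact Iff.rfl
  | tail hxy hstep ih => exact ih.trans (sepFun_step D a b hcl hstep)

lemma bridge {ω : (GammaD D a b).E → Bool} {u w : V3}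
    (hconn : (GammaD D a b).OpenConn ω (Sum.inl u) (Sum.inl w))
    {e : E3} (hsep : ¬ (BelowV e u ↔ BelowV e w)) : LocAB D a b ω e := by
  by_contra hcl
  exact hsep (sepFun_conn D a b hcl hconn)

lemma embed_eq_inr {e'' e : E3} {u : (D (levelE e'')).V}
    {x : interiorV (D (levelE e)) (a (levelE e)) (b (levelE e))}
    (h : embedV D a b e'' u = Sum.inr ⟨e, x⟩) : e'' = e := by
  unfold embedV at h
  by_cases h1 : u = a (levelE e'')
  · rw [dif_pos h1] at h; exact absurd h (by simp)
  · by_cases h2 : u = b (levelE e'')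
    · rw [dif_neg h1, dif_pos h2] at h; exact absurd h (by simp)
    · rw [dif_neg h1, dif_neg h2] at h
      have := Sum.inr.inj h
      exact congrArg Sigma.fst this

lemma embed_cases (e : E3) (u : (D (levelE e)).V) :
    embedV D a b e u = Sum.inl (parentV e) ∨ embedV D a b e u = Sum.inl (some e) ∨
    ∃ x, embedV D a b e u = Sum.inr ⟨e, x⟩ := by
  unfold embedV
  by_cases h1 : u = a (levelE e)
  · left; rw [dif_pos h1]
  · by_cases h2 : u = b (levelE e)
    · right; left; rw [dif_neg h1, dif_pos h2]
    · right; right; exact ⟨⟨u, h1, h2⟩, by rw [dif_neg h1, dif_neg h2]⟩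

lemma interior_reach {ω : (GammaD D a b).E → Bool} {v0 z : (GammaD D a b).V}
    (h : (GammaD D a b).OpenConn ω v0 z) :
    ∀ (e : E3) (x : interiorV (D (levelE e)) (a (levelE e)) (b (levelE e))),
      z = Sum.inr ⟨e, x⟩ →
      Sum.inl (parentV e) ∈ (GammaD D a b).cluster ω v0 ∨
      Sum.inl (some e) ∈ (GammaD D a b).cluster ω v0 ∨
      ∃ x', v0 = Sum.inr ⟨e, x'⟩ := by
  induction h with
  | refl => exact fun e x hz => Or.inr (Or.inr ⟨x, hz⟩)
  | @tail y z hxy hstep ih =>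
    intro e x hz
    obtain ⟨⟨e'', d⟩, hopen, hor⟩ := hstep
    rw [gamma_ends] at hor
    have main : ∀ u u' : (D (levelE e'')).V, embedV D a b e'' u = z →
        embedV D a b e'' u' = y →
        Sum.inl (parentV e) ∈ (GammaD D a b).cluster ω v0 ∨
        Sum.inl (some e) ∈ (GammaD D a b).cluster ω v0 ∨
        ∃ x', v0 = Sum.inr ⟨e, x'⟩ := by
      intro u u' hu hu'
      have he : e'' = e := embed_eq_inr D a b (by rw [hu, hz])
      subst he
      rcases embed_cases D a b e'' u' with h' | h' | ⟨x', h'⟩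
      · left
        rw [← h', hu']
        exact hxy
      · right; left
        rw [← h', hu']
        exact hxy
      · exact ih e'' x' (by rw [← hu', h'])
    rcases hor with h | h
    · injection h with h1 h2
      exact main _ _ h2 h1
    · injection h with h1 h2
      exact main _ _ h1 h2

lemma levelE_eq_parent (e : E3) : levelE e = levelV (parentV e) + 1 := by
  unfold parentV levelV
  by_cases h : e.2 = []
  · rw [if_pos h]
    simp [levelE, h]
  · rw [if_neg h]
    show levelE e = levelE (e.1, e.2.dropLast) + 1
    have : e.2.length ≠ 0 := fun hh => h (List.length_eq_zero_iff.mp hh)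
    simp only [levelE, List.length_dropLast]
    omega

lemma finite_E3_level_le (N : ℕ) : {e : E3 | levelE e ≤ N}.Finite := by
  refine Set.Finite.subset (Set.Finite.prod (Set.finite_univ (α := Fin 3))
    (List.finite_length_le (Fin 2) N)) ?_
  rintro ⟨i, l⟩ he
  have he' : l.length + 1 ≤ N := he
  refine ⟨Set.mem_univ i, ?_⟩
  show l.length ≤ N
  omega

lemma finite_V3_level_le (N : ℕ) : {v : V3 | levelV v ≤ N}.Finite := by
  refine Set.Finite.subset (Set.Finite.insert none
    ((finite_E3_level_le N).image some)) ?_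
  rintro (_ | e) hv
  · exact Set.mem_insert _ _
  · exact Set.mem_insert_of_mem _ ⟨e, hv, rfl⟩

instance interiorV_finite (n : ℕ) [Fintype (D n).V] : Finite (interiorV (D n) (a n) (b n)) :=
  Subtype.finite

lemma tree_infinite [∀ n, Fintype (D n).V] {ω : (GammaD D a b).E → Bool}
    {v0 : (GammaD D a b).V} (h : ((GammaD D a b).cluster ω v0).Infinite) :
    {u : V3 | Sum.inl u ∈ (GammaD D a b).cluster ω v0}.Infinite := by
  by_contra hfin
  rw [Set.not_infinite] at hfin
  obtain ⟨N, hN⟩ : ∃ N, ∀ u ∈ {u : V3 | Sum.inl u ∈ (GammaD D a b).cluster ω v0},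
      levelV u ≤ N := by
    obtain ⟨N, hN⟩ := (hfin.image levelV).bddAbove
    exact ⟨N, fun u hu => hN (Set.mem_image_of_mem _ hu)⟩
  set EE : Set E3 := {e | levelE e ≤ N + 1} ∪ {e | ∃ x, v0 = Sum.inr ⟨e, x⟩} with hEE
  have hEEfin : EE.Finite := by
    refine Set.Finite.union (finite_E3_level_le (N + 1)) ?_
    rcases hv0 : v0 with u | ⟨e0, x0⟩
    · convert Set.finite_empty
      ext e
      simp only [Set.mem_setOf_eq, Set.mem_empty_iff_false, iff_false]
      rintro ⟨x, hx⟩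
      exact nomatch hx
    · refine Set.Finite.subset (Set.finite_singleton e0) ?_
      rintro e ⟨x, hx⟩
      have := Sum.inr.inj hx
      exact Set.mem_singleton_iff.mpr (congrArg Sigma.fst this).symm
  have hsub : (GammaD D a b).cluster ω v0 ⊆
      (Sum.inl '' {u : V3 | Sum.inl u ∈ (GammaD D a b).cluster ω v0}) ∪
      ⋃ e ∈ EE, Set.range (fun x : interiorV (D (levelE e)) (a (levelE e)) (b (levelE e)) =>
        (Sum.inr ⟨e, x⟩ : (GammaD D a b).V)) := by
    rintro z hz
    rcases hz2 : z with u | ⟨e, x⟩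
    · left
      rw [hz2] at hz
      exact ⟨u, hz, rfl⟩
    · right
      have hmem : e ∈ EE := by
        rcases interior_reach D a b hz e x hz2 with hc | hc | hc
        · left
          have h1 := hN _ hc
          have h2 := levelE_eq_parent e
          show levelE e ≤ N + 1
          omega
        · left
          have := hN _ hc
          show levelE e ≤ N + 1
          have h2 : levelV (some e) = levelE e := rfl
          omega
        · right; exact hc
      exact Set.mem_biUnion hmem ⟨x, rfl⟩
  exact h (Set.Finite.subset (Set.Finite.union (hfin.image _)
    (Set.Finite.biUnion hEEfin (fun e _ => Set.finite_range _))) hsub)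

end Bridge

section Meas
variable (D : ℕ → Multigraph) (a b : ∀ n, (D n).V)
variable [∀ n, Fintype (D n).E] [∀ n, DecidableEq (D n).E]

/-- The edges of `Γ_D` belonging to the copy of the tree edge `e`. -/
noncomputable def copyF (e : E3) : Finset ((GammaD D a b).E) :=
  Finset.univ.map ⟨Sigma.mk e, sigma_mk_injective⟩

lemma copyF_disjoint {e e' : E3} (hne : e ≠ e') :
    Disjoint (copyF D a b e) (copyF D a b e') := by
  rw [Finset.disjoint_left]
  rintro ed hmem hmem'
  simp only [copyF, Finset.mem_map, Function.Embedding.coeFn_mk] at hmem hmem'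
  obtain ⟨d, -, rfl⟩ := hmem
  obtain ⟨d', -, h⟩ := hmem'
  exact hne (congrArg Sigma.fst h).symm

lemma locAB_evLocal (e : E3) : EvLocal (copyF D a b e) {ω | LocAB D a b ω e} := by
  intro ω ω' hagree
  have : (fun d => ω ⟨e, d⟩) = (fun d => ω' ⟨e, d⟩) := by
    funext d
    exact hagree ⟨e, d⟩ (by simp [copyF])
  simp only [Set.mem_setOf_eq, LocAB, this]

lemma measure_locAB {p : ℝ} {ν : Measure ((GammaD D a b).E → Bool)}
    (hν : IsBernoulli p ν) (hp : 0 ≤ p) (hp1 : p ≤ 1) (e : E3) :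
    ν {ω | LocAB D a b ω e} =
      ENNReal.ofReal ((D (levelE e)).hprob (a (levelE e)) (b (levelE e)) p) :=
  bern_local_embed hν hp hp1 ⟨Sigma.mk e, sigma_mk_injective⟩
    {η | (D (levelE e)).OpenConn η (a (levelE e)) (b (levelE e))}

lemma measure_locAB_finset {p : ℝ} {ν : Measure ((GammaD D a b).E → Bool)}
    (hν : IsBernoulli p ν) (hp : 0 ≤ p) (hp1 : p ≤ 1) (F : Finset E3) :
    ν (⋂ e ∈ (F : Set E3), {ω | LocAB D a b ω e}) =
      ∏ e ∈ F, ENNReal.ofReal ((D (levelE e)).hprob (a (levelE e)) (b (levelE e)) p) := by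
  rw [bern_finset_prod hν F (copyF D a b) _
    (fun e _ e' _ hne => copyF_disjoint D a b hne) (fun e _ => locAB_evLocal D a b e)]
  exact Finset.prod_congr rfl (fun e _ => measure_locAB D a b hν hp hp1 e)

end Meas

section Subcrit
variable (D : ℕ → Multigraph) (a b : ∀ n, (D n).V)
variable [∀ n, Fintype (D n).E] [∀ n, DecidableEq (D n).E] [∀ n, Fintype (D n).V]

def prefE (w : E3) (j : ℕ) : E3 := (w.1, w.2.take (j - 1))

lemma prefE_level {w : E3} {j : ℕ} (hj1 : 1 ≤ j) (hj : j ≤ levelE w) :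
    levelE (prefE w j) = j := by
  have hj' : j - 1 ≤ w.2.length := by
    have : j ≤ w.2.length + 1 := hj
    omega
  simp only [prefE, levelE, List.length_take]
  rw [min_eq_left hj']
  omega

lemma finite_E3_level_eq (m : ℕ) : {e : E3 | levelE e = m}.Finite :=
  (finite_E3_level_le m).subset (fun _ he => le_of_eq he)

noncomputable def WF (m : ℕ) : Finset E3 := (finite_E3_level_eq m).toFinset

lemma WF_card (m : ℕ) : (WF m).card ≤ 3 * 2 ^ m := by
  have h := Finset.card_le_card_of_injOn
    (f := fun e : E3 => ((e.1, fun i : Fin m => e.2.getD i 0) : Fin 3 × (Fin m → Fin 2)))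
    (t := Finset.univ) (s := WF m) (fun _ _ => Finset.mem_univ _) ?_
  · calc (WF m).card ≤ Finset.univ.card := h
      _ = Fintype.card (Fin 3 × (Fin m → Fin 2)) := rfl
      _ = 3 * 2 ^ m := by simp
  · intro e he e' he' heq
    simp only [Set.Finite.coe_toFinset, WF, Set.mem_setOf_eq, Set.Finite.mem_toFinset] at he he'
    have heq2 : ((e.1, fun i : Fin m => e.2.getD i 0) : Fin 3 × (Fin m → Fin 2))
        = (e'.1, fun i : Fin m => e'.2.getD i 0) := heq
    injection heq2 with h1 h2
    have hlen : e.2.length = e'.2.length := by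
      have hh : levelE e = levelE e' := he.trans he'.symm
      simp only [levelE] at hh
      omega
    have h3 : e.2 = e'.2 := by
      apply List.ext_getElem hlen
      intro i hi1 hi2
      have him : i < m := by
        have : levelE e = m := he
        simp only [levelE] at this
        omega
      have := congrFun h2 ⟨i, him⟩
      simpa [List.getElem?_eq_getElem hi1, List.getElem?_eq_getElem hi2] using this
    exact Prod.ext h1 h3

lemma ennreal_pow_le_pow_low {x : ENNReal} (hx : x ≤ 1) {m n : ℕ} (h : m ≤ n) :
    x ^ n ≤ x ^ m := by
  obtain ⟨c, rfl⟩ := Nat.exists_eq_add_of_le h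
  rw [pow_add]
  exact mul_le_of_le_one_right' (pow_le_one' hx c)

lemma subcrit_null (hab : ∀ n, a n ≠ b n) {p q : ℝ}
    {ν : Measure ((GammaD D a b).E → Bool)}
    (hν : IsBernoulli p ν) (hp0 : 0 ≤ p) (hp1 : p ≤ 1)
    (hq0 : 0 ≤ q) (hq : q < 1 / 2) (M : ℕ)
    (hM : ∀ n, M ≤ n → (D n).hprob (a n) (b n) p ≤ q) :
    ν {ω | ∃ v, ((GammaD D a b).cluster ω v).Infinite} = 0 := by
  haveI : IsProbabilityMeasure ν := hν.1
  -- the event for a single tree vertex u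
  set Iu : V3 → Set ((GammaD D a b).E → Bool) :=
    fun u => {ω | ((GammaD D a b).cluster ω (Sum.inl u)).Infinite} with hIu
  have hsub : {ω | ∃ v, ((GammaD D a b).cluster ω v).Infinite} ⊆ ⋃ u : V3, Iu u := by
    rintro ω ⟨v, hv⟩
    have hT := tree_infinite D a b hv
    obtain ⟨u, hu⟩ := hT.nonempty
    refine Set.mem_iUnion.mpr ⟨u, ?_⟩
    refine Set.Infinite.mono ?_ hv
    intro z hz
    exact Multigraph.openConn_trans (Multigraph.openConn_symm hu) hz
  refine measure_mono_null hsub (measure_iUnion_null (fun u => ?_))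
  -- fix u; show ν (Iu u) = 0
  set k := levelV u with hk
  -- the union-of-open-paths event at depth L
  have key : ∀ L : ℕ, ν (Iu u) ≤
      (((3 * 2 ^ (k + L + 1) : ℕ) : ENNReal)) * (ENNReal.ofReal q) ^ (L + 1 - M) := by
    intro L
    set K := k + L + 1 with hK
    set A : E3 → Set ((GammaD D a b).E → Bool) :=
      fun e => {ω | LocAB D a b ω e} with hA
    have hIncl : Iu u ⊆ ⋃ w ∈ WF K, ⋂ j ∈ (Finset.Icc (k+1) K : Finset ℕ), A (prefE w j) := by
      intro ω hω
      have hT := tree_infinite D a b hω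
      -- find a deep tree vertex in the cluster
      have hdeep : ∃ w', Sum.inl w' ∈ (GammaD D a b).cluster ω (Sum.inl u) ∧ K < levelV w' := by
        by_contra hcon
        push_neg at hcon
        refine hT (Set.Finite.subset (finite_V3_level_le K) ?_)
        intro w' hw'
        exact hcon w' hw'
      obtain ⟨w', hw'mem, hw'lev⟩ := hdeep
      obtain ⟨e', rfl⟩ : ∃ e', w' = some e' := by
        cases w' with
        | none => exact absurd hw'lev (by simp [levelV])
        | some e' => exact ⟨e', rfl⟩
      have hlen : K - 1 ≤ e'.2.length := by
        have : levelV (some e') = e'.2.length + 1 := rfl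
        omega
      set w : E3 := (e'.1, e'.2.take (K - 1)) with hw
      have hwlev : levelE w = K := by
        simp only [hw, levelE, List.length_take, min_eq_left hlen]
        omega
      have hwWF : w ∈ WF K := by
        simp only [WF, Set.Finite.mem_toFinset, Set.mem_setOf_eq]
        exact hwlev
      refine Set.mem_biUnion hwWF ?_
      · simp only [Set.mem_iInter]
        intro j hj
        simp only [Finset.mem_Icc] at hj
        -- prefE w j is a prefix of e' at level j > k
        have htake : prefE w j = (e'.1, e'.2.take (j - 1)) := by
          simp only [prefE, hw, List.take_take]
          rw [min_eq_left (by omega)]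
        have hbel : BelowV (prefE w j) (some e') := by
          rw [belowV_some, htake]
          exact ⟨rfl, List.take_prefix _ _⟩
        have hnbel : ¬ BelowV (prefE w j) u := by
          intro hcon
          have h1 := belowV_level hcon
          have h2 : levelE (prefE w j) = j := by
            rw [htake]
            have : j - 1 ≤ e'.2.length := by omega
            simp only [levelE, List.length_take, min_eq_left this]
            omega
          omega
        have hconn : (GammaD D a b).OpenConn ω (Sum.inl u) (Sum.inl (some e')) := hw'mem
        exact bridge D a b hconn (fun hiff => hnbel (hiff.mpr hbel))
    calc ν (Iu u) ≤ ν (⋃ w ∈ WF K, ⋂ j ∈ (Finset.Icc (k+1) K : Finset ℕ), A (prefE w j)) :=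
          measure_mono hIncl
      _ ≤ ∑ w ∈ WF K, ν (⋂ j ∈ (Finset.Icc (k+1) K : Finset ℕ), A (prefE w j)) :=
          measure_biUnion_finset_le _ _
      _ ≤ ∑ _w ∈ WF K, (ENNReal.ofReal q) ^ (L + 1 - M) := by
          refine Finset.sum_le_sum (fun w hw => ?_)
          have hwlev : levelE w = K := by
            simpa only [WF, Set.Finite.mem_toFinset, Set.mem_setOf_eq] using hw
          have hprod : ν (⋂ j ∈ ((Finset.Icc (k+1) K : Finset ℕ) : Set ℕ), A (prefE w j)) =
              ∏ j ∈ Finset.Icc (k+1) K, ν (A (prefE w j)) := by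
            refine bern_finset_prod hν _ (fun j => copyF D a b (prefE w j)) _ ?_
              (fun j _ => locAB_evLocal D a b (prefE w j))
            intro i hi j hj hne
            refine copyF_disjoint D a b (fun hcon => hne ?_)
            simp only [Finset.mem_Icc] at hi hj
            have hlev1 : levelE (prefE w i) = i := prefE_level (by omega) (by omega)
            have hlev2 : levelE (prefE w j) = j := prefE_level (by omega) (by omega)
            rw [← hlev1, ← hlev2, hcon]
          have hIcc : (⋂ j ∈ ((Finset.Icc (k+1) K : Finset ℕ) : Set ℕ), A (prefE w j)) =
              (⋂ j ∈ (Finset.Icc (k+1) K : Finset ℕ), A (prefE w j)) := by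
            simp
          rw [← hIcc, hprod]
          -- bound the product
          have hfac_le_one : ∀ j ∈ Finset.Icc (k+1) K, ν (A (prefE w j)) ≤ 1 :=
            fun j _ => prob_le_one
          have hsubIcc : Finset.Icc (max (k+1) M) K ⊆ Finset.Icc (k+1) K := by
            intro j hj
            simp only [Finset.mem_Icc] at hj ⊢
            omega
          calc ∏ j ∈ Finset.Icc (k+1) K, ν (A (prefE w j))
              ≤ ∏ j ∈ Finset.Icc (max (k+1) M) K, ν (A (prefE w j)) := by
                rw [← Finset.prod_sdiff hsubIcc]
                exact mul_le_of_le_one_left' (Finset.prod_le_one'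
                  (fun j hj => hfac_le_one j (Finset.mem_sdiff.mp hj).1))
            _ ≤ ∏ _j ∈ Finset.Icc (max (k+1) M) K, ENNReal.ofReal q := by
                refine Finset.prod_le_prod' (fun j hj => ?_)
                simp only [Finset.mem_Icc] at hj
                rw [hA]
                rw [measure_locAB D a b hν hp0 hp1 (prefE w j)]
                have hlev : levelE (prefE w j) = j := prefE_level (by omega) (by omega)
                rw [hlev]
                exact ENNReal.ofReal_le_ofReal (hM j (by omega))
            _ = (ENNReal.ofReal q) ^ (Finset.Icc (max (k+1) M) K).card := by
                rw [Finset.prod_const]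
            _ ≤ (ENNReal.ofReal q) ^ (L + 1 - M) := by
                refine ennreal_pow_le_pow_low (ENNReal.ofReal_le_one.mpr (by linarith)) ?_
                rw [Nat.card_Icc]
                omega
      _ = ((WF K).card : ENNReal) * (ENNReal.ofReal q) ^ (L + 1 - M) := by
          rw [Finset.sum_const, nsmul_eq_mul]
      _ ≤ (((3 * 2 ^ K : ℕ) : ENNReal)) * (ENNReal.ofReal q) ^ (L + 1 - M) := by
          exact mul_le_mul_left (Nat.cast_le.mpr (WF_card K)) _
  -- pass to the limit
  set r : ENNReal := 2 * ENNReal.ofReal q with hr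
  have hr1 : r < 1 := by
    have h1 : ENNReal.ofReal q < ENNReal.ofReal (1/2) :=
      (ENNReal.ofReal_lt_ofReal_iff (by norm_num)).mpr hq
    calc r < 2 * ENNReal.ofReal (1/2) := by
          rw [hr]
          exact ENNReal.mul_lt_mul_right (by norm_num) (by norm_num) h1
      _ = 1 := by
          rw [show ((2:ENNReal)) = ENNReal.ofReal 2 by simp, ← ENNReal.ofReal_mul (by norm_num)]
          norm_num
  set C : ENNReal := ((3 * 2 ^ (k + M) : ℕ) : ENNReal) with hC
  have hbound : ∀ᶠ L in atTop, ν (Iu u) ≤ C * r ^ (L + 1 - M) := by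
    filter_upwards [eventually_ge_atTop M] with L hL
    refine (key L).trans ?_
    have hsplit : (3 * 2 ^ (k + L + 1) : ℕ) = (3 * 2 ^ (k + M)) * 2 ^ (L + 1 - M) := by
      rw [mul_assoc, ← pow_add]
      congr 2
      omega
    rw [hsplit, Nat.cast_mul, mul_assoc, hC, hr, mul_pow]
    refine mul_le_mul_right (le_of_eq ?_) _
    rw [Nat.cast_pow]
    norm_num
  have htend : Tendsto (fun L : ℕ => C * r ^ (L + 1 - M)) atTop (nhds 0) := by
    have h1 : Tendsto (fun m : ℕ => r ^ m) atTop (nhds 0) :=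
      ENNReal.tendsto_pow_atTop_nhds_zero_of_lt_one hr1
    have h2 : Tendsto (fun L : ℕ => L + 1 - M) atTop atTop := by
      refine tendsto_atTop_atTop.mpr (fun n => ⟨n + M, fun L hL => by omega⟩)
    have h3 := h1.comp h2
    have h4 : Tendsto (fun L : ℕ => C * r ^ (L + 1 - M)) atTop (nhds (C * 0)) :=
      ENNReal.Tendsto.const_mul h3 (Or.inr (by rw [hC]; exact ENNReal.natCast_ne_top _))
    simpa using h4
  have : ν (Iu u) ≤ 0 := ge_of_tendsto htend hbound
  exact le_antisymm this zero_le

end Subcrit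

section Supercrit
variable (D : ℕ → Multigraph) (a b : ∀ n, (D n).V)
variable [∀ n, Fintype (D n).E] [∀ n, DecidableEq (D n).E]

def childE (e : E3) (j : Fin 2) : E3 := (e.1, e.2 ++ [j])

lemma childE_level (e : E3) (j : Fin 2) : levelE (childE e j) = levelE e + 1 := by
  simp [childE, levelE]

lemma parentV_childE (e : E3) (j : Fin 2) : parentV (childE e j) = some e := by
  unfold parentV childE
  rw [if_neg (by simp)]
  simp [List.dropLast_concat]

lemma childE_below (e : E3) (j : Fin 2) : BelowE e (childE e j) := ⟨rfl, ⟨[j], rfl⟩⟩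

lemma childE_ne (e : E3) (j : Fin 2) : childE e j ≠ e := by
  intro h
  have := congrArg (fun x : E3 => x.2.length) h
  simp [childE] at this

lemma below_children_disjoint {e x : E3} (h0 : BelowE (childE e 0) x)
    (h1 : BelowE (childE e 1) x) : False := by
  have p0 := h0.2
  have p1 := h1.2
  rw [List.prefix_iff_eq_take] at p0 p1
  have hlen : (childE e 0).2.length = (childE e 1).2.length := by simp [childE]
  have : (childE e 0).2 = (childE e 1).2 := by rw [p0, p1, hlen]
  simp [childE] at this

/-- Event: from the lower endpoint of `e`, the tree-percolation reaches depth `L`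
in the binary subtree below `e`. -/
def Reach : E3 → ℕ → Set ((GammaD D a b).E → Bool)
  | _, 0 => Set.univ
  | e, (L+1) => {ω | ∃ j : Fin 2, LocAB D a b ω (childE e j) ∧ ω ∈ Reach (childE e j) L}

/-- Support of the event `Reach e L`. -/
noncomputable def ES : E3 → ℕ → Finset ((GammaD D a b).E)
  | _, 0 => ∅
  | e, (L+1) => ((copyF D a b (childE e 0) ∪ ES (childE e 0) L) ∪
      (copyF D a b (childE e 1) ∪ ES (childE e 1) L))

lemma ES_spec : ∀ (L : ℕ) (e : E3), ∀ ed ∈ ES D a b e L, BelowE e ed.1 ∧ ed.1 ≠ e := by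
  intro L
  induction L with
  | zero => intro e ed hed; simp [ES] at hed
  | succ L ih =>
    intro e ed hed
    simp only [ES, Finset.mem_union] at hed
    have main : ∀ j : Fin 2, ed ∈ copyF D a b (childE e j) ∨ ed ∈ ES D a b (childE e j) L →
        BelowE e ed.1 ∧ ed.1 ≠ e := by
      intro j hj
      rcases hj with hj | hj
      · simp only [copyF, Finset.mem_map, Function.Embedding.coeFn_mk] at hj
        obtain ⟨d, -, rfl⟩ := hj
        exact ⟨childE_below e j, childE_ne e j⟩
      · obtain ⟨hb, hne⟩ := ih (childE e j) ed hj
        refine ⟨belowE_trans (childE_below e j) hb, ?_⟩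
        intro hcon
        rw [hcon] at hb
        exact childE_ne e j (belowE_antisymm (childE_below e j) hb).symm
    rcases hed with (h | h) | (h | h)
    · exact main 0 (Or.inl h)
    · exact main 0 (Or.inr h)
    · exact main 1 (Or.inl h)
    · exact main 1 (Or.inr h)

lemma mem_child_support {L : ℕ} {e : E3} {j : Fin 2} {ed : (GammaD D a b).E}
    (h : ed ∈ copyF D a b (childE e j) ∪ ES D a b (childE e j) L) :
    BelowE (childE e j) ed.1 := by
  rcases Finset.mem_union.mp h with h | h
  · simp only [copyF, Finset.mem_map, Function.Embedding.coeFn_mk] at h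
    obtain ⟨d, -, rfl⟩ := h
    exact belowE_refl _
  · exact (ES_spec D a b L (childE e j) ed h).1

lemma child_support_disjoint (L : ℕ) (e : E3) :
    Disjoint (copyF D a b (childE e 0) ∪ ES D a b (childE e 0) L)
      (copyF D a b (childE e 1) ∪ ES D a b (childE e 1) L) := by
  rw [Finset.disjoint_left]
  intro ed h0 h1
  exact below_children_disjoint (mem_child_support D a b h0) (mem_child_support D a b h1)

lemma copy_ES_disjoint (L : ℕ) (e : E3) (j : Fin 2) :
    Disjoint (copyF D a b (childE e j)) (ES D a b (childE e j) L) := by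
  rw [Finset.disjoint_left]
  intro ed h0 h1
  have h2 := (ES_spec D a b L (childE e j) ed h1).2
  simp only [copyF, Finset.mem_map, Function.Embedding.coeFn_mk] at h0
  obtain ⟨d, -, rfl⟩ := h0
  exact h2 rfl

lemma reach_evLocal : ∀ (L : ℕ) (e : E3), EvLocal (ES D a b e L) (Reach D a b e L) := by
  intro L
  induction L with
  | zero => intro e ω ω' _; simp [Reach]
  | succ L ih =>
    intro e ω ω' hagree
    simp only [Reach, Set.mem_setOf_eq]
    have hiff : ∀ j : Fin 2,
        ((LocAB D a b ω (childE e j) ∧ ω ∈ Reach D a b (childE e j) L) ↔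
         (LocAB D a b ω' (childE e j) ∧ ω' ∈ Reach D a b (childE e j) L)) := by
      intro j
      have hsub1 : copyF D a b (childE e j) ⊆ ES D a b e (L+1) := by
        intro ed hed
        simp only [ES, Finset.mem_union]
        fin_cases j
        · exact Or.inl (Or.inl hed)
        · exact Or.inr (Or.inl hed)
      have hsub2 : ES D a b (childE e j) L ⊆ ES D a b e (L+1) := by
        intro ed hed
        simp only [ES, Finset.mem_union]
        fin_cases j
        · exact Or.inl (Or.inr hed)
        · exact Or.inr (Or.inr hed)
      have e1 := locAB_evLocal D a b (childE e j) ω ω' (fun i hi => hagree i (hsub1 hi))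
      have e2 := ih (childE e j) ω ω' (fun i hi => hagree i (hsub2 hi))
      exact and_congr e1 e2
    exact exists_congr hiff

lemma reach_antitone : ∀ (L : ℕ) (e : E3), Reach D a b e (L+1) ⊆ Reach D a b e L := by
  intro L
  induction L with
  | zero => intro e ω _; exact Set.mem_univ ω
  | succ L ih =>
    rintro e ω ⟨j, hloc, hreach⟩
    exact ⟨j, hloc, ih (childE e j) hreach⟩

lemma reach_witness (hab : ∀ n, a n ≠ b n) :
    ∀ (L : ℕ) (e : E3) (ω : (GammaD D a b).E → Bool), ω ∈ Reach D a b e L →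
      ∃ e', levelE e' = levelE e + L ∧
        (GammaD D a b).OpenConn ω (Sum.inl (some e)) (Sum.inl (some e')) := by
  intro L
  induction L with
  | zero => intro e ω _; exact ⟨e, by omega, Relation.ReflTransGen.refl⟩
  | succ L ih =>
    rintro e ω ⟨j, hloc, hreach⟩
    obtain ⟨e', hlev, hconn⟩ := ih (childE e j) ω hreach
    have hstep := locAB_conn D a b hab hloc
    rw [parentV_childE] at hstep
    refine ⟨e', by rw [hlev, childE_level]; omega, ?_⟩
    exact Multigraph.openConn_trans hstep hconn

lemma reach_lb {p q δ : ℝ} {ν : Measure ((GammaD D a b).E → Bool)}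
    (hν : IsBernoulli p ν) (hp0 : 0 ≤ p) (hp1 : p ≤ 1)
    (hq : 1/2 < q) (hq1 : q ≤ 1) (hδ : δ = (2*q - 1)/q^2) (M : ℕ)
    (hM : ∀ n, M ≤ n → q ≤ (D n).hprob (a n) (b n) p) :
    ∀ (L : ℕ) (e : E3), M ≤ levelE e → ENNReal.ofReal δ ≤ ν (Reach D a b e L) := by
  haveI : IsProbabilityMeasure ν := hν.1
  have hqpos : 0 < q := by linarith
  have hδpos : 0 < δ := by
    rw [hδ]
    apply div_pos (by linarith) (by positivity)
  have hδ1 : δ ≤ 1 := by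
    rw [hδ, div_le_one (by positivity)]
    nlinarith
  have hqδ0 : 0 ≤ q * δ := by positivity
  have hqδeq : q * δ = (2*q - 1)/q := by
    rw [hδ]
    field_simp
  have hqδ1 : q * δ ≤ 1 := by
    rw [hqδeq, div_le_one hqpos]
    linarith
  intro L
  induction L with
  | zero =>
    intro e _
    simp only [Reach, measure_univ]
    exact ENNReal.ofReal_le_one.mpr hδ1
  | succ L ih =>
    intro e he
    set A : Fin 2 → Set ((GammaD D a b).E → Bool) :=
      fun j => {ω | LocAB D a b ω (childE e j)} ∩ Reach D a b (childE e j) L with hA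
    have hAlocal : ∀ j, EvLocal (copyF D a b (childE e j) ∪ ES D a b (childE e j) L) (A j) :=
      fun j => (locAB_evLocal D a b (childE e j)).inter (reach_evLocal D a b L (childE e j))
    have hAmeas : ∀ j, MeasurableSet (A j) := fun j => local_measurableSet (hAlocal j)
    -- lower bound on ν (A j)
    have hAj : ∀ j, ENNReal.ofReal (q * δ) ≤ ν (A j) := by
      intro j
      rw [hA]
      have := bern_inter_local hν (copy_ES_disjoint D a b L e j)
        (locAB_evLocal D a b (childE e j)) (reach_evLocal D a b L (childE e j))
      rw [this]
      rw [ENNReal.ofReal_mul (le_of_lt hqpos)]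
      refine mul_le_mul' ?_ (ih (childE e j) (by rw [childE_level]; omega))
      rw [measure_locAB D a b hν hp0 hp1 (childE e j)]
      exact ENNReal.ofReal_le_ofReal (hM _ (by rw [childE_level]; omega))
    -- the recursion
    have hset : (Reach D a b e (L+1))ᶜ = (A 0)ᶜ ∩ (A 1)ᶜ := by
      ext ω
      simp only [Reach, Set.mem_compl_iff, Set.mem_setOf_eq, Set.mem_inter_iff, hA,
        Set.mem_inter_iff, Set.mem_setOf_eq]
      rw [Fin.exists_fin_two]
      tauto
    have hcompl : ν ((Reach D a b e (L+1))ᶜ) = (1 - ν (A 0)) * (1 - ν (A 1)) := by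
      rw [hset, bern_inter_local hν (child_support_disjoint D a b L e)
        ((hAlocal 0).compl) ((hAlocal 1).compl)]
      rw [prob_compl_eq_one_sub (hAmeas 0), prob_compl_eq_one_sub (hAmeas 1)]
    have hReachMeas : MeasurableSet (Reach D a b e (L+1)) :=
      local_measurableSet (reach_evLocal D a b (L+1) e)
    have hval : ν (Reach D a b e (L+1)) = 1 - (1 - ν (A 0)) * (1 - ν (A 1)) := by
      rw [← hcompl, prob_compl_eq_one_sub hReachMeas,
        ENNReal.sub_sub_cancel ENNReal.one_ne_top prob_le_one]
    rw [hval]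
    -- numeric bound
    have hfac : ∀ j, (1 - ν (A j)) ≤ ENNReal.ofReal (1 - q * δ) := by
      intro j
      rw [ENNReal.ofReal_sub 1 hqδ0, ENNReal.ofReal_one]
      exact tsub_le_tsub_left (hAj j) 1
    have hprod : (1 - ν (A 0)) * (1 - ν (A 1)) ≤ ENNReal.ofReal ((1 - q * δ)^2) := by
      have := mul_le_mul' (hfac 0) (hfac 1)
      rwa [← ENNReal.ofReal_mul (by nlinarith), ← sq] at this
    refine le_trans ?_ (tsub_le_tsub_left hprod 1)
    rw [show (1:ENNReal) = ENNReal.ofReal 1 from ENNReal.ofReal_one.symm,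
      ← ENNReal.ofReal_sub 1 (by positivity)]
    refine ENNReal.ofReal_le_ofReal ?_
    have hkey : q^2 * δ = 2*q - 1 := by
      rw [hδ]
      field_simp
    nlinarith
end Supercrit

section SupercritMain
variable (D : ℕ → Multigraph) (a b : ∀ n, (D n).V)
variable [∀ n, Fintype (D n).E] [∀ n, DecidableEq (D n).E]

lemma supercrit_pos (hab : ∀ n, a n ≠ b n) {p q : ℝ}
    {ν : Measure ((GammaD D a b).E → Bool)} (hν : IsBernoulli p ν)
    (hp0 : 0 ≤ p) (hp1 : p ≤ 1) (hq : 1/2 < q) (hq1 : q ≤ 1) (M : ℕ)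
    (hM : ∀ n, M ≤ n → q ≤ (D n).hprob (a n) (b n) p) :
    0 < ν {ω | ∃ v, ((GammaD D a b).cluster ω v).Infinite} := by
  haveI : IsProbabilityMeasure ν := hν.1
  set δ : ℝ := (2*q - 1)/q^2 with hδ
  set e₀ : E3 := (0, List.replicate M 0) with he₀
  have he₀lev : M ≤ levelE e₀ := by simp [levelE, he₀]
  have hlb : ∀ L, ENNReal.ofReal δ ≤ ν (Reach D a b e₀ L) :=
    fun L => reach_lb D a b hν hp0 hp1 hq hq1 hδ M hM L e₀ he₀lev
  have hanti : Antitone (fun L => Reach D a b e₀ L) :=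
    antitone_nat_of_succ_le (fun L => reach_antitone D a b L e₀)
  have htend := MeasureTheory.tendsto_measure_iInter_atTop
    (s := fun L => Reach D a b e₀ L)
    (fun L => (local_measurableSet (reach_evLocal D a b L e₀)).nullMeasurableSet)
    hanti ⟨0, measure_ne_top ν _⟩
  have hInter : ENNReal.ofReal δ ≤ ν (⋂ L, Reach D a b e₀ L) :=
    ge_of_tendsto htend (Filter.Eventually.of_forall (fun L => hlb L))
  have hsub : (⋂ L, Reach D a b e₀ L) ⊆
      {ω | ∃ v, ((GammaD D a b).cluster ω v).Infinite} := by
    intro ω hω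
    refine ⟨Sum.inl (some e₀), ?_⟩
    have hw : ∀ L, ∃ e', levelE e' = levelE e₀ + L ∧
        (GammaD D a b).OpenConn ω (Sum.inl (some e₀)) (Sum.inl (some e')) :=
      fun L => reach_witness D a b hab L e₀ ω (Set.mem_iInter.mp hω L)
    choose w hwlev hwconn using hw
    refine Set.infinite_of_injective_forall_mem
      (f := fun L => (Sum.inl (some (w L)) : (GammaD D a b).V)) ?_ ?_
    · intro L L' hLL
      have h1 : w L = w L' := Option.some_injective _ (Sum.inl.inj hLL)
      have h2 := congrArg levelE h1
      rw [hwlev, hwlev] at h2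
      omega
    · intro L
      exact hwconn L
  calc (0:ENNReal) < ENNReal.ofReal δ := by
        apply ENNReal.ofReal_pos.mpr
        rw [hδ]
        apply div_pos (by linarith) (by positivity)
    _ ≤ ν (⋂ L, Reach D a b e₀ L) := hInter
    _ ≤ ν {ω | ∃ v, ((GammaD D a b).cluster ω v).Infinite} := measure_mono hsub

end SupercritMain

lemma bprob_nonneg {E₀ : Type} [Fintype E₀] [DecidableEq E₀] {p : ℝ}
    (hp : 0 ≤ p) (hp1 : p ≤ 1) (A : Set (E₀ → Bool)) : 0 ≤ bprob p A := by
  apply Finset.sum_nonneg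
  intro η _
  split
  · exact Finset.prod_nonneg (fun e _ => by split <;> linarith)
  · exact le_refl 0

/-- Lemma (bond percolation on tree-like graphs): if `limsup h^{D_n}(p) < 1/2` then
`p ≤ p_c^{Γ_D}`, and if `liminf h^{D_n}(p) > 1/2` then `p ≥ p_c^{Γ_D}`. -/
theorem treelike_bond_critical_bounds
    (D : ℕ → Multigraph) (a b : ∀ n, (D n).V) (hab : ∀ n, a n ≠ b n)
    [∀ n, Fintype (D n).E] [∀ n, DecidableEq (D n).E] [∀ n, Fintype (D n).V]
    (hconn : ∀ n, ∀ x y : (D n).V, Relation.ReflTransGen ((D n).Adj) x y)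
    (νE : ℝ → Measure ((GammaD D a b).E → Bool))
    (hν : ∀ p ∈ Set.Icc (0:ℝ) 1, IsBernoulli p (νE p))
    (pc : ℝ) (hpc : IsBondCritical (GammaD D a b) νE pc)
    (p : ℝ) (hp : p ∈ Set.Icc (0:ℝ) 1) :
    (Filter.limsup (fun n => (D n).hprob (a n) (b n) p) Filter.atTop < 1/2 → p ≤ pc) ∧
    (1/2 < Filter.liminf (fun n => (D n).hprob (a n) (b n) p) Filter.atTop → pc ≤ p) := by
  obtain ⟨hp0, hp1⟩ := hp
  have hνp : IsBernoulli p (νE p) := hν p ⟨hp0, hp1⟩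
  haveI : IsProbabilityMeasure (νE p) := hνp.1
  have hnn : ∀ n, 0 ≤ (D n).hprob (a n) (b n) p :=
    fun n => bprob_nonneg hp0 hp1 _
  have hub : ∀ n, 1 ≤ n → (D n).hprob (a n) (b n) p ≤ 1 := by
    intro n hn
    set e : E3 := (0, List.replicate (n-1) 0) with he
    have hlev : levelE e = n := by
      simp only [he, levelE, List.length_replicate]
      omega
    have hm := measure_locAB D a b hνp hp0 hp1 e
    rw [hlev] at hm
    have hle : νE p {ω | LocAB D a b ω e} ≤ 1 := prob_le_one
    rw [hm] at hle
    exact ENNReal.ofReal_le_one.mp hle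
  constructor
  · -- subcritical direction
    intro hlim
    by_contra hcon
    push_neg at hcon
    have hpos := ((hpc.2 p ⟨hp0, hp1⟩).2 hcon)
    set ls := Filter.limsup (fun n => (D n).hprob (a n) (b n) p) Filter.atTop with hls
    set q : ℝ := max ((ls + 1/2)/2) (1/4) with hqdef
    have hq2 : q < 1/2 := max_lt (by linarith) (by norm_num)
    have hq0 : 0 ≤ q := le_trans (by norm_num) (le_max_right _ _)
    have hlsq : ls < q := lt_of_lt_of_le (by linarith) (le_max_left _ _)
    have hbdd : Filter.IsBoundedUnder (· ≤ ·) Filter.atTop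
        (fun n => (D n).hprob (a n) (b n) p) :=
      ⟨1, Filter.eventually_map.mpr (Filter.eventually_atTop.mpr ⟨1, hub⟩)⟩
    have hev := Filter.eventually_lt_of_limsup_lt hlsq hbdd
    obtain ⟨M, hM⟩ := Filter.eventually_atTop.mp hev
    have hnull := subcrit_null D a b hab hνp hp0 hp1 hq0 hq2 M
      (fun n hn => le_of_lt (hM n hn))
    rw [hnull] at hpos
    exact lt_irrefl 0 hpos
  · -- supercritical direction
    intro hlim
    by_contra hcon
    push_neg at hcon
    have hzero := ((hpc.2 p ⟨hp0, hp1⟩).1 hcon)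
    set li := Filter.liminf (fun n => (D n).hprob (a n) (b n) p) Filter.atTop with hli
    set q : ℝ := min ((1/2 + li)/2) (3/4) with hqdef
    have hq : 1/2 < q := lt_min (by linarith) (by norm_num)
    have hq1 : q ≤ 1 := le_trans (min_le_right _ _) (by norm_num)
    have hqli : q < li := lt_of_le_of_lt (min_le_left _ _) (by linarith)
    have hbdd : Filter.IsBoundedUnder (· ≥ ·) Filter.atTop
        (fun n => (D n).hprob (a n) (b n) p) :=
      ⟨0, Filter.eventually_map.mpr (Filter.Eventually.of_forall (fun n => hnn n))⟩
    have hev := Filter.eventually_lt_of_lt_liminf hqli hbdd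
    obtain ⟨M, hM⟩ := Filter.eventually_atTop.mp hev
    have hposS := supercrit_pos D a b hab hνp hp0 hp1 hq hq1 M
      (fun n hn => le_of_lt (hM n hn))
    rw [hzero] at hposS
    exact lt_irrefl 0 hposS
end

section
/- For the complete bipartite graph D^k = K_{2,k+2} with marked vertices a, b (each adjacent only to z_1 and z_2), in the DaC model with p = 0 and r = 2/3, the pivotality probability f^{D^k}(0, 2/3) equals 16/27, which is strictly greater than 1/2. -/
open MeasureTheory Filter Set

attribute [local instance] Classical.propDecidable

/-- The complete bipartite graph `K_{2,k+2}`, with parts `{z₁, z₂}` (the vertices `0, 1`)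
and `{a, b, v₁, …, v_k}` (the vertices `2, 3, 4, …, k+3`); `a = 2` and `b = 3`. -/
abbrev Kgraph (k : ℕ) : Multigraph where
  V := Fin (k + 4)
  E := Fin 2 × Fin (k + 2)
  ends := fun e => (Fin.castLE (by omega) e.1, e.2.succ.succ)

section Aux

lemma openConn_false_iff (G : Multigraph) (x y : G.V) :
    G.OpenConn (fun _ => false) x y ↔ x = y := by
  constructor
  · intro h; induction h with
    | refl => rfl
    | tail _ h ih => obtain ⟨e, he, _⟩ := h; simp at he
  · rintro rfl; exact .refl

lemma cluster_false_eq (G : Multigraph) (v : G.V) : G.cluster (fun _ => false) v = {v} := by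
  ext w; simp [Multigraph.cluster, openConn_false_iff, eq_comm]

lemma minRep_false_eq (D : Multigraph) [Fintype D.V] [LinearOrder D.V] (v : D.V) :
    D.minRep (fun _ => false) v = v := by
  have h1 : D.minRep (fun _ => false) v ∈ (Set.toFinite (D.cluster (fun _ => false) v)).toFinset :=
    Finset.min'_mem _ _
  rw [Set.Finite.mem_toFinset, cluster_false_eq] at h1
  exact h1

lemma sum_prod_bool_aux {V : Type} [Fintype V] (g : V → Bool → ℝ) :
    ∑ κ : V → Bool, ∏ v, g v (κ v) = ∏ v, (g v true + g v false) := by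
  have h := Finset.prod_univ_sum (fun _ : V => (Finset.univ : Finset Bool)) (fun v b => g v b)
  rw [Fintype.piFinset_univ] at h
  rw [← h]
  exact Finset.prod_congr rfl fun v _ => by rw [Fintype.sum_bool]

lemma sum_weight_ind_aux {V : Type} [Fintype V] (r : ℝ) (s : Finset V) :
    ∑ κ : V → Bool, (∏ v, (if κ v then r else 1 - r)) * (∏ v ∈ s, (if κ v then (1:ℝ) else 0))
      = r ^ s.card := by
  have key : ∀ κ : V → Bool,
      (∏ v, (if κ v then r else 1 - r)) * (∏ v ∈ s, (if κ v then (1:ℝ) else 0))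
      = ∏ v, ((if κ v then r else 1 - r) * (if v ∈ s then (if κ v then (1:ℝ) else 0) else 1)) := by
    intro κ
    rw [Finset.prod_mul_distrib]
    congr 1
    rw [Finset.prod_ite_mem, Finset.univ_inter]
  simp_rw [key]
  rw [sum_prod_bool_aux
    (fun v b => (if b then r else 1 - r) * (if v ∈ s then (if b then (1:ℝ) else 0) else 1))]
  have step : ∀ v : V,
      (if true then r else 1 - r) * (if v ∈ s then (if true then (1:ℝ) else 0) else 1) +
      (if false then r else 1 - r) * (if v ∈ s then (if false then (1:ℝ) else 0) else 1)
      = if v ∈ s then r else 1 := by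
    intro v; by_cases hv : v ∈ s <;> simp [hv]
  rw [Finset.prod_congr rfl (fun v _ => step v), Finset.prod_ite_mem, Finset.univ_inter,
    Finset.prod_const]

lemma Kgraph_adj_two (k : ℕ) (v : Fin (k+4)) : (Kgraph k).Adj 2 v ↔ v = 0 ∨ v = 1 := by
  constructor
  · rintro ⟨e, he | he⟩
    · exfalso
      have h1 : (Fin.castLE (by omega : 2 ≤ k + 4) e.1) = (2 : Fin (k+4)) := by
        simpa using congrArg Prod.fst he
      have h2 : (e.1 : Fin 2).val = 2 := congrArg Fin.val h1
      omega
    · have h1 : (e.2.succ.succ : Fin (k+4)) = (2 : Fin (k+4)) := by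
        simpa using congrArg Prod.snd he
      have h3 : v = Fin.castLE (by omega : 2 ≤ k + 4) e.1 := by
        simpa using (congrArg Prod.fst he).symm
      have h4 : e.1.val < 2 := e.1.isLt
      rcases (by omega : e.1.val = 0 ∨ e.1.val = 1) with h | h
      · left; rw [h3]; apply Fin.ext; simpa using h
      · right; rw [h3]; apply Fin.ext; simpa using h
  · rintro (rfl | rfl)
    · exact ⟨((0 : Fin 2), (0 : Fin (k+2))), Or.inr rfl⟩
    · exact ⟨((1 : Fin 2), (0 : Fin (k+2))), Or.inr rfl⟩

lemma Kgraph_adj_zb (k : ℕ) : (Kgraph k).Adj 0 3 := ⟨((0 : Fin 2), (1 : Fin (k+2))), Or.inl rfl⟩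
lemma Kgraph_adj_ob (k : ℕ) : (Kgraph k).Adj 1 3 := ⟨((1 : Fin 2), (1 : Fin (k+2))), Or.inl rfl⟩

lemma Kgraph_piv_iff (k : ℕ) (κ : Fin (k+4) → Bool) :
    ((fun _ => false, κ) : ((Kgraph k).E → Bool) × ((Kgraph k).V → Bool)) ∈
      (Kgraph k).PivEvent 2 3 ↔ (κ 3 = true ∧ (κ 0 = true ∨ κ 1 = true)) := by
  have hne : (2 : Fin (k+4)) ≠ 3 := by
    intro h; have : (2:ℕ) = 3 := congrArg Fin.val h; omega
  have h03 : (0 : Fin (k+4)) ≠ 3 := by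
    intro h; have : (0:ℕ) = 3 := congrArg Fin.val h; omega
  have h13 : (1 : Fin (k+4)) ≠ 3 := by
    intro h; have : (1:ℕ) = 3 := congrArg Fin.val h; omega
  have h02 : (0 : Fin (k+4)) ≠ 2 := by
    intro h; have : (0:ℕ) = 2 := congrArg Fin.val h; omega
  have h12 : (1 : Fin (k+4)) ≠ 2 := by
    intro h; have : (1:ℕ) = 2 := congrArg Fin.val h; omega
  constructor
  · rintro (h | ⟨-, v, hv, ⟨u, hu, hadj⟩, hb, hpath⟩)
    · exact absurd ((openConn_false_iff _ _ _).mp h) hne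
    · rw [cluster_false_eq] at hu
      simp only [Set.mem_singleton_iff] at hu; subst hu
      rcases (Kgraph_adj_two k v).mp hadj with rfl | rfl
      · refine ⟨?_, Or.inl hb⟩
        rcases Relation.ReflTransGen.cases_tail hpath with h | ⟨c, _, _, hc⟩
        · exact absurd h.symm h03
        · exact hc
      · refine ⟨?_, Or.inr hb⟩
        rcases Relation.ReflTransGen.cases_tail hpath with h | ⟨c, _, _, hc⟩
        · exact absurd h.symm h13
        · exact hc
  · rintro ⟨h3, h0 | h1⟩
    · refine Or.inr ⟨fun h => hne ((openConn_false_iff _ _ _).mp h), 0, ?_,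
        ⟨2, ?_, (Kgraph_adj_two k 0).mpr (Or.inl rfl)⟩, h0,
        Relation.ReflTransGen.single ⟨Kgraph_adj_zb k, h3⟩⟩
      · rw [cluster_false_eq]; simpa using h02
      · rw [cluster_false_eq]; exact rfl
    · refine Or.inr ⟨fun h => hne ((openConn_false_iff _ _ _).mp h), 1, ?_,
        ⟨2, ?_, (Kgraph_adj_two k 1).mpr (Or.inr rfl)⟩, h1,
        Relation.ReflTransGen.single ⟨Kgraph_adj_ob k, h3⟩⟩
      · rw [cluster_false_eq]; simpa using h12
      · rw [cluster_false_eq]; exact rfl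

end Aux

/-- In the DaC model on `K_{2,k+2}` with `p = 0` and `r = 2/3`, the pivotality
probability equals `16/27 > 1/2`. -/
theorem Kgraph_f_at_zero (k : ℕ) :
    (Kgraph k).fprob 2 3 0 (2/3) = 16/27 ∧ (1/2 : ℝ) < 16/27 := by
  have h30 : (3 : Fin (k+4)) ≠ 0 := by
    intro h; have : (3:ℕ) = 0 := congrArg Fin.val h; omega
  have h31 : (3 : Fin (k+4)) ≠ 1 := by
    intro h; have : (3:ℕ) = 1 := congrArg Fin.val h; omega
  have h01 : (0 : Fin (k+4)) ≠ 1 := by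
    intro h; have : (0:ℕ) = 1 := congrArg Fin.val h; omega
  refine ⟨?_, by norm_num⟩
  rw [Multigraph.fprob, Multigraph.dacProb]
  rw [Finset.sum_eq_single (fun _ => false)]
  rotate_left
  · intro η _ hη
    apply Finset.sum_eq_zero; intro κ _
    have hz : (∏ e : (Kgraph k).E, if η e then (0:ℝ) else 1 - 0) = 0 := by
      have : ∃ e, η e = true := by
        by_contra hc; push_neg at hc
        exact hη (funext fun e => by simpa using hc e)
      obtain ⟨e, he⟩ := this
      exact Finset.prod_eq_zero (Finset.mem_univ e) (by simp [he])
    rw [hz]; ring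
  · intro h; exact absurd (Finset.mem_univ _) h
  have hmin : ∀ κ : (Kgraph k).V → Bool,
      (fun v => κ ((Kgraph k).minRep (fun _ => false) v)) = κ :=
    fun κ => funext fun v => by rw [minRep_false_eq]
  have hP : (∏ e : (Kgraph k).E, if (fun _ => false) e then (0:ℝ) else 1 - 0) = 1 := by simp
  have hκ : ∀ κ : (Kgraph k).V → Bool,
      (if ((fun _ => false, fun v => κ ((Kgraph k).minRep (fun _ => false) v)) ∈
        (Kgraph k).PivEvent 2 3) then (1:ℝ) else 0)
      = (∏ v ∈ ({3,0} : Finset (Fin (k+4))), if κ v then (1:ℝ) else 0)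
      + (∏ v ∈ ({3,1} : Finset (Fin (k+4))), if κ v then (1:ℝ) else 0)
      - (∏ v ∈ ({3,0,1} : Finset (Fin (k+4))), if κ v then (1:ℝ) else 0) := by
    intro κ
    rw [hmin κ, if_congr (Kgraph_piv_iff k κ) rfl rfl]
    rw [Finset.prod_pair h30, Finset.prod_pair h31,
      Finset.prod_insert (by simp [h30, h31]),
      Finset.prod_pair h01]
    rcases hb3 : κ 3 <;> rcases hb0 : κ 0 <;> rcases hb1 : κ 1 <;>
      simp [hb3, hb0, hb1]
  simp_rw [hP, one_mul, hκ, mul_sub, mul_add]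
  rw [Finset.sum_sub_distrib, Finset.sum_add_distrib,
    sum_weight_ind_aux (2/3) ({3,0} : Finset (Fin (k+4))),
    sum_weight_ind_aux (2/3) ({3,1} : Finset (Fin (k+4))),
    sum_weight_ind_aux (2/3) ({3,0,1} : Finset (Fin (k+4)))]
  have c1 : ({3,0} : Finset (Fin (k+4))).card = 2 := by
    rw [Finset.card_insert_of_notMem (by simp [h30]), Finset.card_singleton]
  have c2 : ({3,1} : Finset (Fin (k+4))).card = 2 := by
    rw [Finset.card_insert_of_notMem (by simp [h31]), Finset.card_singleton]
  have c3 : ({3,0,1} : Finset (Fin (k+4))).card = 3 := by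
    rw [Finset.card_insert_of_notMem (by simp [h30, h31]),
      Finset.card_insert_of_notMem (by simp [h01]), Finset.card_singleton]
  rw [c1, c2, c3]
  norm_num
end
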